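/- arXiv:2105.14605 — 6 statements merged into one kernel-verified Lean document; each statement's English description precedes it below -/
import Mathlib

section
/- Let D be a weighted oriented graph such that w(v) > 1 for every vertex v of D. If the whole vertex set V(D) is a strong vertex cover of D, then I(D)^(s) = I(D)^s for all s ≥ 1, where I(D)^(s) denotes the s-th symbolic power of the edge ideal I(D). -/
open MvPolynomial

/-- A weighted oriented graph on the (finite) vertex type `V`: a set of directed
edges whose underlying edge set is a finite simple graph, together with a weight
function `w : V → ℕ` with `w v ≥ 1` for every vertex. -/
structure WOGraph (V : Type*) where
  E : Set (V × V)
  w : V → ℕ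
  loopless : ∀ v : V, (v, v) ∉ E
  one_dir : ∀ u v : V, (u, v) ∈ E → (v, u) ∉ E
  w_pos : ∀ v : V, 1 ≤ w v

namespace WOGraph

variable {V : Type*}

/-- The out-neighbourhood `N⁺(x)`. -/
def outN (D : WOGraph V) (x : V) : Set V := {y | (x, y) ∈ D.E}

/-- The in-neighbourhood `N⁻(x)`. -/
def inN (D : WOGraph V) (x : V) : Set V := {y | (y, x) ∈ D.E}

/-- An isolated vertex: no neighbours at all. -/
def IsIsolated (D : WOGraph V) (x : V) : Prop := D.outN x = ∅ ∧ D.inN x = ∅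

/-- A source: a non-isolated vertex with empty in-neighbourhood. -/
def IsSource (D : WOGraph V) (x : V) : Prop := ¬ D.IsIsolated x ∧ D.inN x = ∅

/-- A sink: a non-isolated vertex with empty out-neighbourhood. -/
def IsSink (D : WOGraph V) (x : V) : Prop := ¬ D.IsIsolated x ∧ D.outN x = ∅

/-- A vertex cover: a set of vertices meeting every edge. -/
def IsVertexCover (D : WOGraph V) (C : Set V) : Prop := ∀ e ∈ D.E, e.1 ∈ C ∨ e.2 ∈ C

/-- `L₁(C) = {x ∈ C : N⁺(x) ∩ Cᶜ ≠ ∅}`. -/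
def L1 (D : WOGraph V) (C : Set V) : Set V := {x ∈ C | (D.outN x ∩ Cᶜ).Nonempty}

/-- `L₂(C) = {x ∈ C \ L₁(C) : N⁻(x) ∩ Cᶜ ≠ ∅}`. -/
def L2 (D : WOGraph V) (C : Set V) : Set V :=
  {x ∈ C | x ∉ D.L1 C ∧ (D.inN x ∩ Cᶜ).Nonempty}

/-- `L₃(C) = C \ (L₁(C) ∪ L₂(C))`. -/
def L3 (D : WOGraph V) (C : Set V) : Set V := C \ (D.L1 C ∪ D.L2 C)

/-- A strong vertex cover: a vertex cover `C` such that for each `x ∈ L₃(C)` there is an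
edge `(y, x)` with `y ∈ L₂(C) ∪ L₃(C)` and `w(y) ≥ 2`. -/
def IsStrongVertexCover (D : WOGraph V) (C : Set V) : Prop :=
  D.IsVertexCover C ∧
    ∀ x ∈ D.L3 C, ∃ y : V, (y, x) ∈ D.E ∧ y ∈ D.L2 C ∪ D.L3 C ∧ 2 ≤ D.w y

/-- The edge ideal `I(D) = (x·y^{w(y)} : (x,y) ∈ E(D))` in `k[xᵥ : v ∈ V]`. -/
noncomputable def edgeIdeal (k : Type*) [Field k] (D : WOGraph V) : Ideal (MvPolynomial V k) :=
  Ideal.span {f | ∃ e ∈ D.E, f = X e.1 * X e.2 ^ D.w e.2}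

/-- The irreducible ideal `I_C = ({x : x ∈ L₁(C)} ∪ {x^{w(x)} : x ∈ L₂(C) ∪ L₃(C)})`
associated to a (strong) vertex cover `C`. -/
noncomputable def irredIdeal (k : Type*) [Field k] (D : WOGraph V) (C : Set V) : Ideal (MvPolynomial V k) :=
  Ideal.span ((fun v => (X v : MvPolynomial V k)) '' D.L1 C ∪
    (fun v => (X v : MvPolynomial V k) ^ D.w v) '' (D.L2 C ∪ D.L3 C))

/-- `D` is an oriented rooted tree with root `z`: `z` has no in-edges, and every
non-isolated vertex `v ≠ z` is reachable from `z` by a directed path and has a unique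
in-neighbour.  Equivalently, the underlying graph is a tree (on the support together
with the root) and every edge is directed away from the root `z` along the unique
path from `z`. -/
def IsOrientedRootedTree (D : WOGraph V) (z : V) : Prop :=
  (∀ u : V, (u, z) ∉ D.E) ∧
    ∀ v : V, ¬ D.IsIsolated v → v ≠ z →
      Relation.ReflTransGen (fun a b : V => (a, b) ∈ D.E) z v ∧ (∃! u : V, (u, v) ∈ D.E)

end WOGraph

/-- The `s`-th symbolic power `I^{(s)} = ⋂_{p ∈ Ass(R/I)} (I^s R_p ∩ R)` of an ideal `I`,
where the contraction `I^s R_p ∩ R` is the preimage of `I^s R_p` under `R → R_p`. -/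
noncomputable def symbolicPower {R : Type*} [CommRing R] (I : Ideal R) (s : ℕ) : Ideal R :=
  ⨅ p : associatedPrimes R (R ⧸ I),
    haveI : p.1.IsPrime := p.2.1
    (Ideal.map (algebraMap R (Localization p.1.primeCompl)) (I ^ s)).comap
      (algebraMap R (Localization p.1.primeCompl))

section Aux

open MvPolynomial

variable {V : Type*} {k : Type*} [Field k]

/-- Key monomial-ideal lemma: if `u·a` lies in a monomial ideal and `u` has nonzero
constant term, then `a` lies in the monomial ideal. -/
lemma aux_monomial_colon {S : Set (V →₀ ℕ)} {u a : MvPolynomial V k}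
    (hu : constantCoeff u ≠ 0)
    (h : u * a ∈ Ideal.span ((fun m => monomial m (1 : k)) '' S)) :
    a ∈ Ideal.span ((fun m => monomial m (1 : k)) '' S) := by
  classical
  rw [mem_ideal_span_monomial_image] at h ⊢
  by_contra hcon
  push_neg at hcon
  obtain ⟨m0, hm0, hbad0⟩ := hcon
  set T := a.support.filter (fun m => ∀ s ∈ S, ¬ s ≤ m) with hT
  have hTne : T.Nonempty := ⟨m0, Finset.mem_filter.2 ⟨hm0, hbad0⟩⟩
  obtain ⟨m, hmT, hmin⟩ := T.exists_minimal hTne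
  have hma : m ∈ a.support := (Finset.mem_filter.1 hmT).1
  have hmbad : ∀ s ∈ S, ¬ s ≤ m := (Finset.mem_filter.1 hmT).2
  have hcoeff : (u * a).coeff m = constantCoeff u * a.coeff m := by
    rw [coeff_mul, Finset.sum_eq_single ((0 : V →₀ ℕ), m)]
    · rw [constantCoeff_eq]
    · rintro ⟨p, q⟩ hpq hne
      have hpq' : p + q = m := Finset.HasAntidiagonal.mem_antidiagonal.mp hpq
      by_cases hq : q ∈ a.support
      · have hqle : q ≤ m := hpq' ▸ self_le_add_left q p
        have hqbad : ∀ s ∈ S, ¬ s ≤ q := fun s hs hsq => hmbad s hs (hsq.trans hqle)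
        have hqT : q ∈ T := Finset.mem_filter.2 ⟨hq, hqbad⟩
        have hqm : q = m := by
          by_contra hne'
          exact hne' (le_antisymm hqle (hmin hqT hqle))
        subst hqm
        have hp0 : p = 0 := by
          have h2 := hpq'
          nth_rewrite 2 [← zero_add q] at h2
          exact add_right_cancel h2
        exact absurd (by rw [hp0]) hne
      · rw [MvPolynomial.notMem_support_iff.mp hq, mul_zero]
    · intro habs
      exact absurd (Finset.HasAntidiagonal.mem_antidiagonal.mpr (zero_add m)) habs
  have hne : (u * a).coeff m ≠ 0 := by
    rw [hcoeff]
    exact mul_ne_zero hu (MvPolynomial.mem_support_iff.mp hma)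
  obtain ⟨s, hs, hsle⟩ := h m (MvPolynomial.mem_support_iff.mpr hne)
  exact hmbad s hs hsle

/-- Powers of a monomial ideal are monomial ideals. -/
lemma aux_span_monomial_pow (S : Set (V →₀ ℕ)) (s : ℕ) :
    ∃ T : Set (V →₀ ℕ), (Ideal.span ((fun m => monomial m (1 : k)) '' S)) ^ s
      = Ideal.span ((fun m => monomial m (1 : k)) '' T) := by
  induction s with
  | zero =>
    refine ⟨{0}, ?_⟩
    rw [pow_zero, Set.image_singleton,
      show (monomial (0 : V →₀ ℕ) (1 : k)) = 1 from by simp,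
      Ideal.span_singleton_one, Ideal.one_eq_top]
  | succ n ih =>
    obtain ⟨T, hT⟩ := ih
    refine ⟨Set.image2 (· + ·) T S, ?_⟩
    rw [pow_succ, hT, Ideal.span_mul_span']
    congr 1
    ext f
    constructor
    · rintro ⟨x, hx, y, hy, rfl⟩
      obtain ⟨mx, hmx, rfl⟩ := hx
      obtain ⟨my, hmy, rfl⟩ := hy
      exact ⟨mx + my, Set.mem_image2_of_mem hmx hmy, by simp [monomial_mul]⟩
    · rintro ⟨mz, hmz, rfl⟩
      obtain ⟨mx, hmx, my, hmy, rfl⟩ := hmz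
      exact ⟨monomial mx 1, ⟨mx, hmx, rfl⟩, monomial my 1, ⟨my, hmy, rfl⟩,
        by simp [monomial_mul]⟩

/-- The edge ideal is a monomial ideal. -/
lemma aux_edgeIdeal_eq (D : WOGraph V) :
    D.edgeIdeal k = Ideal.span ((fun m => monomial m (1 : k)) ''
      ((fun e : V × V => Finsupp.single e.1 1 + Finsupp.single e.2 (D.w e.2)) '' D.E)) := by
  have hmono : ∀ e : V × V,
      (X e.1 * X e.2 ^ D.w e.2 : MvPolynomial V k)
        = monomial (Finsupp.single e.1 1 + Finsupp.single e.2 (D.w e.2)) 1 := by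
    intro e
    rw [show (X e.1 : MvPolynomial V k) = X e.1 ^ 1 from (pow_one _).symm,
      X_pow_eq_monomial, X_pow_eq_monomial, monomial_mul, mul_one]
  unfold WOGraph.edgeIdeal
  congr 1
  ext g
  simp only [Set.mem_setOf_eq, Set.image_image, Set.mem_image]
  constructor
  · rintro ⟨e, he, rfl⟩
    exact ⟨e, he, (hmono e).symm⟩
  · rintro ⟨e, he, rfl⟩
    exact ⟨e, he, (hmono e).symm⟩

/-- The ideal generated by all variables is the kernel of the constant-coefficient map. -/
lemma aux_span_X_eq_ker :
    Ideal.span (X '' (Set.univ : Set V) : Set (MvPolynomial V k))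
      = RingHom.ker (constantCoeff : MvPolynomial V k →+* k) := by
  apply le_antisymm
  · rw [Ideal.span_le]
    rintro _ ⟨v, -, rfl⟩
    simp [RingHom.mem_ker]
  · intro g hg
    rw [RingHom.mem_ker] at hg
    rw [mem_ideal_span_X_image]
    intro m hm
    have hm0 : m ≠ 0 := by
      rintro rfl
      exact (MvPolynomial.mem_support_iff.mp hm) (by rw [← constantCoeff_eq]; exact hg)
    obtain ⟨i, hi⟩ := Finsupp.ne_iff.mp hm0
    exact ⟨i, Set.mem_univ i, by simpa using hi⟩

end Aux

/-- Let `D` be a weighted oriented graph with `w(v) > 1` for every vertex.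
If the whole vertex set `V(D)` is a strong vertex cover of `D`, then `I(D)^{(s)} = I(D)^s`
for all `s ≥ 1`. -/
theorem statement_1 {V : Type*} [Fintype V] (k : Type*) [Field k] (D : WOGraph V)
    (hw : ∀ v : V, 1 < D.w v)
    (hC : D.IsStrongVertexCover (Set.univ : Set V)) :
    ∀ s : ℕ, 1 ≤ s → symbolicPower (D.edgeIdeal k) s = D.edgeIdeal k ^ s := by
  classical
  intro s _
  set I := D.edgeIdeal k with hI
  set P : Ideal (MvPolynomial V k) := Ideal.span (X '' (Set.univ : Set V)) with hPdef
  have hPker : P = RingHom.ker (constantCoeff : MvPolynomial V k →+* k) := aux_span_X_eq_ker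
  haveI hPprime : P.IsPrime := by rw [hPker]; exact RingHom.ker_isPrime _
  -- every vertex has an in-neighbour
  have hin : ∀ v : V, ∃ y : V, (y, v) ∈ D.E := by
    intro v
    have hv3 : v ∈ D.L3 (Set.univ : Set V) := by
      refine ⟨Set.mem_univ v, ?_⟩
      rintro (h1 | h2)
      · obtain ⟨y, hy⟩ := h1.2
        exact hy.2 (Set.mem_univ y)
      · obtain ⟨y, hy⟩ := h2.2.2
        exact hy.2 (Set.mem_univ y)
    obtain ⟨y, hy, -, -⟩ := hC.2 v hv3
    exact ⟨y, hy⟩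
  -- the witness monomial
  set F : V →₀ ℕ := ∑ v : V, Finsupp.single v (D.w v - 1) with hFdef
  set f : MvPolynomial V k := ∏ v : V, X v ^ (D.w v - 1) with hfdef
  have hfmon : f = monomial F 1 := by
    rw [hfdef, hFdef, monomial_sum_index]
    simp [X_pow_eq_monomial]
  have hF : ∀ v : V, F v = D.w v - 1 := by
    intro v
    rw [hFdef, Finset.sum_apply']
    rw [Finset.sum_eq_single v]
    · rw [Finsupp.single_eq_same]
    · intro u _ hu
      exact Finsupp.single_eq_of_ne' hu
    · intro h
      exact absurd (Finset.mem_univ v) h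
  -- f is not in the edge ideal
  have hfI : f ∉ I := by
    rw [hI, aux_edgeIdeal_eq, mem_ideal_span_monomial_image]
    intro hmem
    have hFsupp : F ∈ f.support := by
      rw [hfmon, support_monomial, if_neg one_ne_zero]
      exact Finset.mem_singleton_self F
    obtain ⟨m, ⟨e, he, rfl⟩, hle⟩ := hmem F hFsupp
    have hne : e.1 ≠ e.2 := by
      intro h
      have : e = (e.2, e.2) := Prod.ext h rfl
      exact D.loopless e.2 (this ▸ he)
    have h2 := Finsupp.le_def.mp hle e.2
    simp only [Finsupp.add_apply, Finsupp.single_eq_of_ne hne, zero_add,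
      Finsupp.single_eq_same, hF e.2] at h2
    have := hw e.2
    omega
  -- X v * f ∈ I for every v
  have hXvf : ∀ v : V, X v * f ∈ I := by
    intro v
    obtain ⟨y, hy⟩ := hin v
    have hyne : y ≠ v := by
      intro h
      exact D.loopless v (h ▸ hy)
    have h1 : f = X v ^ (D.w v - 1) * ∏ u ∈ Finset.univ.erase v, X u ^ (D.w u - 1) :=
      (Finset.mul_prod_erase Finset.univ _ (Finset.mem_univ v)).symm
    have hymem : y ∈ Finset.univ.erase v := Finset.mem_erase.2 ⟨hyne, Finset.mem_univ y⟩
    have h2 : ∏ u ∈ Finset.univ.erase v, X u ^ (D.w u - 1)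
        = X y ^ (D.w y - 1) * ∏ u ∈ (Finset.univ.erase v).erase y, X u ^ (D.w u - 1) :=
      (Finset.mul_prod_erase _ (fun u => (X u : MvPolynomial V k) ^ (D.w u - 1)) hymem).symm
    have hxv : (X v : MvPolynomial V k) ^ D.w v = X v ^ (D.w v - 1) * X v := by
      conv_lhs => rw [show D.w v = (D.w v - 1) + 1 from by have := hw v; omega]
      rw [pow_succ]
    have hxy : (X y : MvPolynomial V k) ^ (D.w y - 1) = X y ^ (D.w y - 2) * X y := by
      conv_lhs => rw [show D.w y - 1 = (D.w y - 2) + 1 from by have := hw y; omega]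
      rw [pow_succ]
    have key : X v * f = (X y * X v ^ D.w v) *
        (X y ^ (D.w y - 2) * ∏ u ∈ (Finset.univ.erase v).erase y, X u ^ (D.w u - 1)) := by
      rw [h1, h2, hxv, hxy]
      ring
    rw [key]
    exact Ideal.mul_mem_right _ _
      (Ideal.subset_span ⟨(y, v), hy, rfl⟩)
  -- P is an associated prime of R/I
  have hPass : P ∈ associatedPrimes (MvPolynomial V k) (MvPolynomial V k ⧸ I) := by
    refine ⟨hPprime, Ideal.Quotient.mk I f, ?_⟩
    suffices hPeq : P = (⊥ : Submodule (MvPolynomial V k) (MvPolynomial V k ⧸ I)).colon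
        {Ideal.Quotient.mk I f} by
      rw [← hPeq, hPprime.radical]
    ext g
    rw [Submodule.mem_colon_singleton, Submodule.mem_bot, ← Ideal.Quotient.mk_eq_mk,
      ← Submodule.Quotient.mk_smul, smul_eq_mul, Ideal.Quotient.mk_eq_mk,
      Ideal.Quotient.eq_zero_iff_mem]
    constructor
    · intro hg
      have hle : P ≤ Submodule.colon I (Ideal.span {f}) := by
        rw [hPdef, Ideal.span_le]
        rintro _ ⟨v, -, rfl⟩
        rw [SetLike.mem_coe, Ideal.mem_colon_span_singleton]
        exact hXvf v
      have := hle hg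
      rwa [Ideal.mem_colon_span_singleton] at this
    · intro hgf
      by_contra hg
      apply hfI
      have hu : constantCoeff g ≠ 0 := by
        intro h0
        exact hg (by rw [hPker, RingHom.mem_ker]; exact h0)
      rw [hI, aux_edgeIdeal_eq]
      rw [hI, aux_edgeIdeal_eq] at hgf
      exact aux_monomial_colon hu hgf
  -- conclude
  apply le_antisymm
  · have hle : symbolicPower I s ≤
        (Ideal.map (algebraMap (MvPolynomial V k) (Localization P.primeCompl)) (I ^ s)).comap
          (algebraMap (MvPolynomial V k) (Localization P.primeCompl)) :=
      iInf_le _ (⟨P, hPass⟩ : associatedPrimes (MvPolynomial V k) (MvPolynomial V k ⧸ I))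
    refine hle.trans ?_
    intro a ha
    rw [Ideal.mem_comap] at ha
    obtain ⟨⟨i, u⟩, hiu⟩ := (IsLocalization.mem_map_algebraMap_iff P.primeCompl _).mp ha
    have hM : P.primeCompl ≤ nonZeroDivisors (MvPolynomial V k) := by
      intro x hx
      rw [mem_nonZeroDivisors_iff_ne_zero]
      rintro rfl
      exact hx P.zero_mem
    have hinj := IsLocalization.injective (Localization P.primeCompl) hM
    have hau : a * (u : MvPolynomial V k) = i := hinj (by rw [map_mul]; exact hiu)
    have hupos : constantCoeff (u : MvPolynomial V k) ≠ 0 := by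
      have hx0 : ∀ z : MvPolynomial V k, constantCoeff z = 0 → z ∈ P := by
        intro z hz
        rw [hPker]
        exact RingHom.mem_ker.mpr hz
      intro h0
      exact u.2 (hx0 _ h0)
    obtain ⟨T, hT⟩ := aux_span_monomial_pow (k := k)
      ((fun e : V × V => Finsupp.single e.1 1 + Finsupp.single e.2 (D.w e.2)) '' D.E) s
    have hIs : I ^ s = Ideal.span ((fun m => monomial m (1 : k)) '' T) := by
      rw [hI, aux_edgeIdeal_eq]; exact hT
    rw [hIs]
    refine aux_monomial_colon hupos ?_
    rw [mul_comm, hau, ← hIs]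
    exact i.2
  · exact le_iInf fun p => Ideal.le_comap_map
end

section
/- Let D be a weighted oriented cycle with vertices x₁, ..., xₙ and directed edges (x₁,x₂), (x₂,x₃), ..., (x_{n-1},xₙ), (xₙ,x₁) (a naturally oriented cycle), such that w(v) > 1 for every vertex v. Then I(D)^(s) = I(D)^s for all s ≥ 1, i.e., the s-th symbolic power of the edge ideal I(D) = (x₁x₂^{w₂}, x₂x₃^{w₃}, ..., x_{n-1}xₙ^{wₙ}, xₙx₁^{w₁}) equals its s-th ordinary power. -/
open MvPolynomial

section AuxMon

variable {σ : Type*} {k : Type*} [Field k]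

/-- A polynomial with nonzero constant term is a nonzerodivisor modulo a monomial ideal. -/
lemma monomial_ideal_regular (S : Set (σ →₀ ℕ)) {u r : MvPolynomial σ k}
    (hu : constantCoeff u ≠ 0)
    (h : u * r ∈ Ideal.span ((fun s => monomial s (1 : k)) '' S)) :
    r ∈ Ideal.span ((fun s => monomial s (1 : k)) '' S) := by
  classical
  rw [mem_ideal_span_monomial_image] at h ⊢
  by_contra hc
  push_neg at hc
  obtain ⟨μ0, hμ0, hμ0'⟩ := hc
  set T : Finset (σ →₀ ℕ) := r.support.filter (fun μ => ¬ ∃ s ∈ S, s ≤ μ) with hT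
  have hTne : T.Nonempty := ⟨μ0, Finset.mem_filter.mpr ⟨hμ0, by push_neg; exact hμ0'⟩⟩
  obtain ⟨μ, hμT, hmin⟩ : ∃ μ ∈ T, ∀ x ∈ T, ¬ x < μ :=
    let ⟨μ, hμ⟩ := Finset.exists_minimal hTne; ⟨μ, hμ.1, fun x hx => hμ.not_lt hx⟩
  have hμsup : μ ∈ r.support := (Finset.mem_filter.mp hμT).1
  have hμbad : ¬ ∃ s ∈ S, s ≤ μ := (Finset.mem_filter.mp hμT).2
  have hcoeff : MvPolynomial.coeff μ (u * r) = constantCoeff u * MvPolynomial.coeff μ r := by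
    rw [MvPolynomial.coeff_mul, Finset.sum_eq_single ((0 : σ →₀ ℕ), μ)]
    · simp [constantCoeff_eq]
    · rintro ⟨b1, b2⟩ hb hbne
      have hsum : b1 + b2 = μ := Finset.HasAntidiagonal.mem_antidiagonal.mp hb
      by_cases hb2 : MvPolynomial.coeff b2 r = 0
      · simp [hb2]
      · exfalso
        have hb2sup : b2 ∈ r.support := mem_support_iff.mpr hb2
        have hle : b2 ≤ μ := hsum ▸ le_add_self
        have hne : b2 ≠ μ := by
          rintro rfl
          have hb10 : b1 = 0 := by
            have h2 : b1 + b2 = 0 + b2 := by rw [zero_add]; exact hsum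
            exact add_right_cancel h2
          exact hbne (by rw [hb10])
        have hlt : b2 < μ := lt_of_le_of_ne hle hne
        by_cases hgood : ∃ s ∈ S, s ≤ b2
        · obtain ⟨s, hs, hsle⟩ := hgood
          exact hμbad ⟨s, hs, hsle.trans hle⟩
        · exact hmin b2 (Finset.mem_filter.mpr ⟨hb2sup, hgood⟩) hlt
    · intro h0
      exact absurd (Finset.HasAntidiagonal.mem_antidiagonal.mpr (zero_add μ)) h0
  have hμ' : μ ∈ (u * r).support := by
    rw [mem_support_iff, hcoeff]
    exact mul_ne_zero hu (mem_support_iff.mp hμsup)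
  exact hμbad (h μ hμ')

/-- Powers of monomial ideals are monomial ideals. -/
lemma pow_monomial_ideal (S : Set (σ →₀ ℕ)) (s : ℕ) :
    ∃ T : Set (σ →₀ ℕ), Ideal.span ((fun s => monomial s (1 : k)) '' S) ^ s
      = Ideal.span ((fun s => monomial s (1 : k)) '' T) := by
  induction s with
  | zero =>
    refine ⟨{0}, ?_⟩
    simp [Ideal.span_singleton_one, Ideal.one_eq_top]
  | succ m ih =>
    obtain ⟨T, hT⟩ := ih
    refine ⟨Set.image2 (· + ·) T S, ?_⟩
    rw [pow_succ, hT, Ideal.span_mul_span']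
    congr 1
    ext x
    simp only [Set.mem_mul, Set.mem_image, Set.mem_image2]
    constructor
    · rintro ⟨_, ⟨a, ha, rfl⟩, _, ⟨b, hb, rfl⟩, rfl⟩
      exact ⟨a + b, ⟨a, ha, b, hb, rfl⟩, by rw [monomial_mul, one_mul]⟩
    · rintro ⟨_, ⟨a, ha, b, hb, rfl⟩, rfl⟩
      exact ⟨_, ⟨a, ha, rfl⟩, _, ⟨b, hb, rfl⟩, by rw [monomial_mul, one_mul]⟩

end AuxMon

/-- Let `D` be a weighted naturally oriented cycle on vertices
`x_0, …, x_{n-1}` (edges `(x_i, x_{i+1 mod n})`) with `w(v) > 1` for every vertex.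
Then `I(D)^{(s)} = I(D)^s` for all `s ≥ 1`. -/
theorem statement_2 {n : ℕ} (hn : 3 ≤ n) (k : Type*) [Field k] (D : WOGraph (Fin n))
    (hE : D.E = {e : Fin n × Fin n | (e.2 : ℕ) = ((e.1 : ℕ) + 1) % n})
    (hw : ∀ v : Fin n, 1 < D.w v) :
    ∀ s : ℕ, 1 ≤ s → symbolicPower (D.edgeIdeal k) s = D.edgeIdeal k ^ s := by
  classical
  intro s _hs
  haveI : NeZero n := ⟨by omega⟩
  -- Fin n arithmetic
  have h1 : ((1 : Fin n) : ℕ) = 1 := by rw [Fin.val_one', Nat.mod_eq_of_lt (by omega)]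
  have hne1 : ∀ v : Fin n, v + 1 ≠ v := by
    intro v h
    have hv := v.isLt
    have h2 := congrArg Fin.val h
    rw [Fin.val_add, h1] at h2
    rcases Nat.lt_or_ge (v.val + 1) n with hlt | hge
    · rw [Nat.mod_eq_of_lt hlt] at h2; omega
    · have he : (v : ℕ) + 1 = n := by omega
      rw [he, Nat.mod_self] at h2; omega
  have hsub : ∀ v : Fin n, v - 1 + 1 = v := fun v => sub_add_cancel v 1
  have hne : ∀ v : Fin n, v - 1 ≠ v := by
    intro v h
    have h' := congrArg (· + 1) h
    simp only [hsub] at h'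
    exact hne1 v h'.symm
  -- edges of the cycle
  have hedge : ∀ e : Fin n × Fin n, e ∈ D.E ↔ e.2 = e.1 + 1 := by
    intro e
    rw [hE]
    simp only [Set.mem_setOf_eq]
    rw [Fin.ext_iff, Fin.val_add, h1]
  -- the generating monomials
  set S : Set (Fin n →₀ ℕ) :=
    Set.range (fun i : Fin n => Finsupp.single i 1 + Finsupp.single (i + 1) (D.w (i + 1)))
    with hS
  have hgen : ∀ e : Fin n × Fin n,
      (X e.1 * X e.2 ^ D.w e.2 : MvPolynomial (Fin n) k)
        = monomial (Finsupp.single e.1 1 + Finsupp.single e.2 (D.w e.2)) 1 := by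
    intro e
    rw [← pow_one (X e.1), X_pow_eq_monomial, X_pow_eq_monomial, monomial_mul, one_mul]
  have hI : D.edgeIdeal k = Ideal.span ((fun s => monomial s (1 : k)) '' S) := by
    unfold WOGraph.edgeIdeal
    congr 1
    ext f
    simp only [Set.mem_setOf_eq, Set.mem_image, hS, Set.mem_range]
    constructor
    · rintro ⟨e, he, rfl⟩
      have h2 : e.2 = e.1 + 1 := (hedge e).mp he
      refine ⟨_, ⟨e.1, rfl⟩, ?_⟩
      rw [hgen e, h2]
    · rintro ⟨d, ⟨i, rfl⟩, rfl⟩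
      exact ⟨(i, i + 1), (hedge (i, i + 1)).mpr rfl, (hgen (i, i + 1)).symm⟩
  -- the witness monomial
  set d0 : Fin n →₀ ℕ := Finsupp.equivFunOnFinite.symm (fun v => D.w v - 1) with hd0
  have hd0apply : ∀ v, d0 v = D.w v - 1 := fun v => rfl
  -- the maximal ideal
  set mI : Ideal (MvPolynomial (Fin n) k) := Ideal.span (Set.range X) with hmIdef
  have hmI : ∀ f : MvPolynomial (Fin n) k, f ∈ mI ↔ constantCoeff f = 0 := by
    intro f
    rw [hmIdef, ← Set.image_univ, mem_ideal_span_X_image, constantCoeff_eq]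
    constructor
    · intro h
      by_contra h0
      obtain ⟨i, _, hi⟩ := h 0 (mem_support_iff.mpr h0)
      simp at hi
    · intro h0 μ hμ
      rcases eq_or_ne μ 0 with rfl | hμ0
      · exact absurd h0 (mem_support_iff.mp hμ)
      · obtain ⟨i, hi⟩ := Finsupp.ne_iff.mp hμ0
        exact ⟨i, Set.mem_univ i, by simpa using hi⟩
  have hmIprime : mI.IsPrime := by
    have hker : mI = RingHom.ker (constantCoeff : MvPolynomial (Fin n) k →+* k) :=
      Ideal.ext fun f => (hmI f).trans (Iff.symm RingHom.mem_ker)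
    rw [hker]
    exact (RingHom.ker_isMaximal_of_surjective (constantCoeff : MvPolynomial (Fin n) k →+* k)
      (fun a => ⟨C a, constantCoeff_C (Fin n) a⟩)).isPrime
  haveI := hmIprime
  -- the witness monomial is not in the edge ideal
  have hf0 : (monomial d0 1 : MvPolynomial (Fin n) k) ∉ D.edgeIdeal k := by
    rw [hI, mem_ideal_span_monomial_image]
    intro h
    have hd0mem : d0 ∈ (monomial d0 (1 : k)).support := by
      rw [support_monomial, if_neg one_ne_zero]; exact Finset.mem_singleton_self _
    obtain ⟨si, hsi, hle⟩ := h d0 hd0mem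
    obtain ⟨i, rfl⟩ := hsi
    have hle' := Finsupp.le_def.mp hle (i + 1)
    rw [Finsupp.add_apply, Finsupp.single_apply, Finsupp.single_apply,
      if_neg (fun h' => hne1 i h'.symm), if_pos rfl, hd0apply] at hle'
    have := hw (i + 1)
    omega
  -- colon characterization
  have hcolon : ∀ r : MvPolynomial (Fin n) k,
      r * monomial d0 1 ∈ D.edgeIdeal k ↔ r ∈ mI := by
    intro r
    constructor
    · intro h
      by_contra h0
      have h0' : constantCoeff r ≠ 0 := fun hcc => h0 ((hmI r).mpr hcc)
      have h' := monomial_ideal_regular S h0' (by rwa [hI] at h)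
      rw [← hI] at h'
      exact hf0 h'
    · intro h
      have hle : mI ≤ (D.edgeIdeal k).colon (Ideal.span {monomial d0 1} : Ideal (MvPolynomial (Fin n) k)) := by
        rw [hmIdef, Ideal.span_le]
        rintro _ ⟨v, rfl⟩
        rw [SetLike.mem_coe, Ideal.mem_colon_span_singleton]
        have hXv : (X v : MvPolynomial (Fin n) k) * monomial d0 1
            = monomial (Finsupp.single v 1 + d0) 1 := by
          rw [← pow_one (X v), X_pow_eq_monomial, monomial_mul, one_mul]
        rw [hXv, hI, mem_ideal_span_monomial_image]
        intro xi hxi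
        rw [support_monomial, if_neg one_ne_zero, Finset.mem_singleton] at hxi
        subst hxi
        refine ⟨Finsupp.single (v - 1) 1 + Finsupp.single ((v - 1) + 1) (D.w ((v - 1) + 1)),
          ⟨v - 1, rfl⟩, ?_⟩
        rw [hsub v]
        intro a
        have hwv := hw v
        rcases eq_or_ne v a with rfl | hva
        · rw [Finsupp.add_apply, Finsupp.add_apply, Finsupp.single_apply, Finsupp.single_apply,
            Finsupp.single_apply, if_neg (hne v), if_pos rfl, if_pos rfl, hd0apply]
          omega
        · rcases eq_or_ne (v - 1) a with rfl | hva1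
          · rw [Finsupp.add_apply, Finsupp.add_apply, Finsupp.single_apply, Finsupp.single_apply,
              Finsupp.single_apply, if_pos rfl, if_neg hva, if_neg hva, hd0apply]
            have := hw (v - 1)
            omega
          · rw [Finsupp.add_apply, Finsupp.add_apply, Finsupp.single_apply, Finsupp.single_apply,
              Finsupp.single_apply, if_neg hva1, if_neg hva, if_neg hva]
            simp
      exact Ideal.mem_colon_span_singleton.mp (hle h)
  -- mI is an associated prime of R/I
  have hass : mI ∈ associatedPrimes (MvPolynomial (Fin n) k)
      ((MvPolynomial (Fin n) k) ⧸ (D.edgeIdeal k)) := by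
    refine ⟨hmIprime, ⟨Ideal.Quotient.mk _ (monomial d0 1), ?_⟩⟩
    rw [← hmIprime.radical]
    congr 1
    ext r
    rw [Submodule.mem_colon_singleton, Submodule.mem_bot]
    have hsmul : r • (Ideal.Quotient.mk (D.edgeIdeal k) (monomial d0 1))
        = Ideal.Quotient.mk _ (r * monomial d0 1) := rfl
    rw [hsmul, Ideal.Quotient.eq_zero_iff_mem]
    exact (hcolon r).symm
  -- conclusion
  unfold symbolicPower
  apply le_antisymm
  · obtain ⟨T, hT⟩ := pow_monomial_ideal (k := k) S s
    have hpow : D.edgeIdeal k ^ s = Ideal.span ((fun s => monomial s (1 : k)) '' T) := by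
      rw [hI, hT]
    refine le_trans (iInf_le _ (⟨mI, hass⟩ : associatedPrimes _ _)) ?_
    intro r hr
    rw [Ideal.mem_comap] at hr
    obtain ⟨⟨a, u⟩, hau⟩ :=
      (IsLocalization.mem_map_algebraMap_iff mI.primeCompl (Localization mI.primeCompl)).mp hr
    rw [← map_mul] at hau
    obtain ⟨c, hc⟩ := (IsLocalization.eq_iff_exists mI.primeCompl _).mp hau
    have hmem : ((c : MvPolynomial (Fin n) k) * (u : MvPolynomial (Fin n) k)) * r
        ∈ D.edgeIdeal k ^ s := by
      have heq : ((c : MvPolynomial (Fin n) k) * (u : MvPolynomial (Fin n) k)) * r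
          = (c : MvPolynomial (Fin n) k) * (r * (u : MvPolynomial (Fin n) k)) := by ring
      rw [heq, hc]
      exact Ideal.mul_mem_left _ _ a.2
    have hcc : constantCoeff ((c : MvPolynomial (Fin n) k) * (u : MvPolynomial (Fin n) k)) ≠ 0 := by
      rw [map_mul]
      exact mul_ne_zero (fun h => c.2 ((hmI _).mpr h)) (fun h => u.2 ((hmI _).mpr h))
    rw [hpow] at hmem ⊢
    exact monomial_ideal_regular T hcc hmem
  · refine le_iInf ?_
    rintro ⟨p, hp⟩
    exact Ideal.le_comap_map
end

section
/- Let R = k[x, y, z] be a polynomial ring in three variables over a field k, and let a, b be integers with a ≥ 2 and b ≥ 2. Then for all s ≥ 1, (x, z^b)^s ∩ (y^a, y z^b)^s ⊆ (x y^a, y z^b)^s. -/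
open MvPolynomial

lemma span_pair_pow {R : Type*} [CommRing R] (f g : R) (s : ℕ) :
    Ideal.span {f, g} ^ s = Ideal.span ((fun q => f ^ (s - q) * g ^ q) '' Set.Iic s) := by
  induction s with
  | zero =>
    simp only [pow_zero, Ideal.one_eq_top]
    have : (fun q => f ^ (0 - q) * g ^ q) '' Set.Iic 0 = {1} := by
      ext u
      simp only [Set.mem_image, Set.mem_Iic, Nat.le_zero, Set.mem_singleton_iff]
      constructor
      · rintro ⟨q, rfl, rfl⟩; simp
      · rintro rfl; exact ⟨0, rfl, by simp⟩
    rw [this, Ideal.span_singleton_one]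
  | succ n ih =>
    rw [pow_succ, ih, Ideal.span_mul_span']
    apply le_antisymm
    · rw [Ideal.span_le]
      rintro u ⟨x, ⟨q, hq, rfl⟩, y, hy, rfl⟩
      simp only [Set.mem_Iic] at hq
      apply Ideal.subset_span
      rw [Set.mem_insert_iff, Set.mem_singleton_iff] at hy
      rcases hy with h | h
      · exact ⟨q, Set.mem_Iic.2 (by omega), by
          rw [h]
          show f ^ (n + 1 - q) * g ^ q = f ^ (n - q) * g ^ q * f
          have h1 : n + 1 - q = (n - q) + 1 := by omega
          rw [h1, pow_succ]; ring⟩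
      · exact ⟨q + 1, Set.mem_Iic.2 (by omega), by
          rw [h]
          show f ^ (n + 1 - (q + 1)) * g ^ (q + 1) = f ^ (n - q) * g ^ q * g
          have h1 : n + 1 - (q + 1) = n - q := by omega
          rw [h1, pow_succ, mul_assoc]⟩
    · rw [Ideal.span_le]
      rintro u ⟨q, hq, rfl⟩
      simp only [Set.mem_Iic] at hq
      apply Ideal.subset_span
      rcases Nat.lt_or_ge q (n + 1) with h | h
      · refine ⟨f ^ (n - q) * g ^ q, ⟨q, Set.mem_Iic.2 (by omega), rfl⟩, f,
          Set.mem_insert _ _, ?_⟩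
        show f ^ (n - q) * g ^ q * f = f ^ (n + 1 - q) * g ^ q
        have h1 : n + 1 - q = (n - q) + 1 := by omega
        rw [h1, pow_succ]; ring
      · have hq' : q = n + 1 := by omega
        subst hq'
        refine ⟨f ^ (n - n) * g ^ n, ⟨n, Set.mem_Iic.2 le_rfl, rfl⟩, g,
          Set.mem_insert_of_mem _ rfl, ?_⟩
        show f ^ (n - n) * g ^ n * g = f ^ (n + 1 - (n + 1)) * g ^ (n + 1)
        simp [pow_succ]

/-- In `R = k[x, y, z]` (here `x = X 0`, `y = X 1`, `z = X 2`), for integers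
`a, b ≥ 2` and all `s ≥ 1`, `(x, z^b)^s ∩ (y^a, y z^b)^s ⊆ (x y^a, y z^b)^s`. -/
theorem statement_6 (k : Type*) [Field k] (a b : ℕ) (ha : 2 ≤ a) (hb : 2 ≤ b) :
    ∀ s : ℕ, 1 ≤ s →
      (Ideal.span {X 0, (X 2 : MvPolynomial (Fin 3) k) ^ b}) ^ s ⊓
          (Ideal.span {(X 1 : MvPolynomial (Fin 3) k) ^ a, X 1 * X 2 ^ b}) ^ s ≤
        (Ideal.span {(X 0 : MvPolynomial (Fin 3) k) * X 1 ^ a, X 1 * X 2 ^ b}) ^ s := by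
  intro s _hs
  set dI : ℕ → (Fin 3 →₀ ℕ) := fun q =>
    Finsupp.single 0 (s - q) + Finsupp.single 2 (b * q) with hdI
  set dJ : ℕ → (Fin 3 →₀ ℕ) := fun q =>
    Finsupp.single 1 (a * (s - q) + q) + Finsupp.single 2 (b * q) with hdJ
  set dK : ℕ → (Fin 3 →₀ ℕ) := fun q =>
    Finsupp.single 0 (s - q) + (Finsupp.single 1 (a * (s - q) + q) + Finsupp.single 2 (b * q))
    with hdK
  have hIe : (fun q => (X 0 : MvPolynomial (Fin 3) k) ^ (s - q) * (X 2 ^ b) ^ q) '' Set.Iic s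
      = (fun d => monomial d (1 : k)) '' (dI '' Set.Iic s) := by
    rw [Set.image_image]
    apply congrFun (congrArg _ _)
    funext q
    calc (X 0 : MvPolynomial (Fin 3) k) ^ (s - q) * (X 2 ^ b) ^ q
        = X 0 ^ (s - q) * X 2 ^ (b * q) := by rw [← pow_mul]
      _ = monomial (dI q) 1 := by
          rw [hdI, X_pow_eq_monomial, X_pow_eq_monomial, monomial_mul, one_mul]
  have hJe : (fun q => ((X 1 : MvPolynomial (Fin 3) k) ^ a) ^ (s - q) * (X 1 * X 2 ^ b) ^ q)
        '' Set.Iic s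
      = (fun d => monomial d (1 : k)) '' (dJ '' Set.Iic s) := by
    rw [Set.image_image]
    apply congrFun (congrArg _ _)
    funext q
    calc ((X 1 : MvPolynomial (Fin 3) k) ^ a) ^ (s - q) * (X 1 * X 2 ^ b) ^ q
        = X 1 ^ (a * (s - q) + q) * X 2 ^ (b * q) := by
          rw [mul_pow, ← pow_mul, ← pow_mul, pow_add]; ring
      _ = monomial (dJ q) 1 := by
          rw [hdJ, X_pow_eq_monomial, X_pow_eq_monomial, monomial_mul, one_mul]
  have hKe : (fun q => ((X 0 : MvPolynomial (Fin 3) k) * X 1 ^ a) ^ (s - q)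
        * (X 1 * X 2 ^ b) ^ q) '' Set.Iic s
      = (fun d => monomial d (1 : k)) '' (dK '' Set.Iic s) := by
    rw [Set.image_image]
    apply congrFun (congrArg _ _)
    funext q
    calc ((X 0 : MvPolynomial (Fin 3) k) * X 1 ^ a) ^ (s - q) * (X 1 * X 2 ^ b) ^ q
        = X 0 ^ (s - q) * (X 1 ^ (a * (s - q) + q) * X 2 ^ (b * q)) := by
          rw [mul_pow, mul_pow, ← pow_mul, ← pow_mul, pow_add]; ring
      _ = monomial (dK q) 1 := by
          rw [hdK, X_pow_eq_monomial, X_pow_eq_monomial, X_pow_eq_monomial, monomial_mul,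
            monomial_mul, one_mul, one_mul]
  rintro p ⟨hp1, hp2⟩
  simp only [SetLike.mem_coe] at hp1 hp2
  rw [span_pair_pow, hIe, mem_ideal_span_monomial_image] at hp1
  rw [span_pair_pow, hJe, mem_ideal_span_monomial_image] at hp2
  rw [span_pair_pow, hKe, mem_ideal_span_monomial_image]
  intro m hm
  obtain ⟨d1, ⟨q1, hq1, rfl⟩, hle1⟩ := hp1 m hm
  obtain ⟨d2, ⟨q2, hq2, rfl⟩, hle2⟩ := hp2 m hm
  rw [Set.mem_Iic] at hq1 hq2
  set q := max q1 q2 with hq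
  have hqs : q ≤ s := max_le hq1 hq2
  refine ⟨dK q, ⟨q, Set.mem_Iic.2 hqs, rfl⟩, ?_⟩
  rw [Finsupp.le_def] at hle1 hle2 ⊢
  have h10 := hle1 0
  have h12 := hle1 2
  have h21 := hle2 1
  have h22 := hle2 2
  simp [hdI, hdJ, Finsupp.single_apply] at h10 h12 h21 h22
  intro i
  have key : a * (s - q) + q ≤ a * (s - q2) + q2 := by
    have e1 : a * (s - q2) = a * (s - q) + a * (q - q2) := by
      rw [← Nat.mul_add]
      congr 1
      omega
    have e2 : q - q2 ≤ a * (q - q2) := Nat.le_mul_of_pos_left _ (by omega)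
    omega
  have hmax : b * q ≤ m 2 := by
    rcases max_cases q1 q2 with ⟨h, _⟩ | ⟨h, _⟩ <;> rw [hq, h]
    · exact h12
    · exact h22
  fin_cases i <;>
    simp [hdK, Finsupp.single_apply]
  · omega
  · calc a * (s - q) + q ≤ a * (s - q2) + q2 := key
      _ ≤ m 1 := h21
  · exact hmax
end

section
/- Let D be a weighted oriented uni-directed line with vertices V(D) = {x₁, ..., xₙ} and directed edges E(D) = {(xᵢ, x_{i+1}) : 1 ≤ i ≤ n-1}, so that I(D) = (x₁x₂^{w₂}, x₂x₃^{w₃}, ..., x_{n-1}xₙ^{wₙ}). If for some i with 1 < i < n-1 one has wᵢ ≥ 2 and w_{i+1} = 1, then I(D)^(3) ≠ I(D)^3. -/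
open MvPolynomial

section AuxStatement7

open Finsupp

private lemma auxXmul {σ : Type*} {R : Type*} [CommSemiring R] (u v : σ) (c : ℕ) :
    (X u * X v ^ c : MvPolynomial σ R) =
      monomial (Finsupp.single u 1 + Finsupp.single v c) 1 := by
  have h1 : (X u : MvPolynomial σ R) = monomial (Finsupp.single u 1) 1 := by
    rw [← pow_one (X u), X_pow_eq_monomial]
  rw [h1, X_pow_eq_monomial, monomial_mul, one_mul]

private lemma edgeIdeal_eq_span {n : ℕ} (k : Type*) [Field k] (D : WOGraph (Fin n)) :
    D.edgeIdeal k = Ideal.span ((fun s => monomial s (1 : k)) ''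
      {s : Fin n →₀ ℕ | ∃ e ∈ D.E, s = Finsupp.single e.1 1 + Finsupp.single e.2 (D.w e.2)}) := by
  unfold WOGraph.edgeIdeal
  congr 1
  ext f
  constructor
  · rintro ⟨e, he, rfl⟩
    exact ⟨_, ⟨e, he, rfl⟩, (auxXmul e.1 e.2 (D.w e.2)).symm⟩
  · rintro ⟨s, ⟨e, he, rfl⟩, rfl⟩
    exact ⟨e, he, (auxXmul e.1 e.2 (D.w e.2)).symm⟩

private def cfun (j W W' v : ℕ) : ℕ :=
  if v = j then 0 else if v = j + 1 then W' else if v = j + 2 then (W - 1) * W'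
  else if v = j + 3 then 1 else W * W'

private lemma cfun_bound (j W W' t d : ℕ) (hW : 2 ≤ W) (hW' : 1 ≤ W') (hd : 1 ≤ d)
    (hA : t = j → d = W) (hB : t = j + 1 → d = 1) (hC : t = j + 2 → d = W') :
    W * W' ≤ cfun j W W' t + cfun j W W' (t + 1) * d := by
  have hsub : (W - 1) * W' = W * W' - W' := by rw [Nat.sub_mul, one_mul]
  have hle : W' ≤ W * W' := Nat.le_mul_of_pos_left W' (by omega)
  by_cases h1 : t = j
  · subst h1
    unfold cfun
    rw [if_pos rfl, if_neg (by omega), if_pos rfl, hA rfl, zero_add, mul_comm]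
  · by_cases h2 : t = j + 1
    · subst h2
      unfold cfun
      rw [if_neg (by omega), if_pos rfl, if_neg (by omega), if_neg (by omega), if_pos rfl,
        hB rfl, mul_one, hsub, add_comm, Nat.sub_add_cancel hle]
    · by_cases h3 : t = j + 2
      · subst h3
        unfold cfun
        rw [if_neg (by omega), if_neg (by omega), if_pos rfl, if_neg (by omega),
          if_neg (by omega), if_neg (by omega), if_pos rfl, hC rfl, hsub, one_mul,
          Nat.sub_add_cancel hle]
      · by_cases h4 : t = j + 3
        · subst h4
          unfold cfun
          rw [if_neg (by omega), if_neg (by omega), if_neg (by omega), if_pos rfl,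
            if_neg (by omega), if_neg (by omega), if_neg (by omega), if_neg (by omega)]
          calc W * W' = W * W' * 1 := (mul_one _).symm
            _ ≤ W * W' * d := Nat.mul_le_mul_left _ hd
            _ ≤ 1 + W * W' * d := Nat.le_add_left _ _
        · unfold cfun
          rw [if_neg h1, if_neg h2, if_neg h3, if_neg h4]
          exact Nat.le_add_right _ _


private lemma comb_aux {n : ℕ} (k : Type*) [Field k] (D : WOGraph (Fin n))
    (hE : D.E = {e : Fin n × Fin n | (e.2 : ℕ) = (e.1 : ℕ) + 1})
    (j : ℕ) (hn : j + 4 ≤ n)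
    (hw1 : D.w ⟨j + 2, by omega⟩ = 1)
    (f : MvPolynomial (Fin n) k)
    (H2 : X (⟨j + 2, by omega⟩ : Fin n) * f ∈ D.edgeIdeal k)
    (H3 : X (⟨j + 3, by omega⟩ : Fin n) * f ∈ D.edgeIdeal k)
    (H4 : ∀ h : j + 4 < n, X (⟨j + 4, h⟩ : Fin n) * f ∈ D.edgeIdeal k) :
    f ∈ D.edgeIdeal k := by
  have h2 : j + 2 < n := by omega
  have h3 : j + 3 < n := by omega
  simp only [edgeIdeal_eq_span, mem_ideal_span_monomial_image] at H2 H3 H4 ⊢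
  intro μ hμ
  by_contra hcon
  push_neg at hcon
  have hle_iff : ∀ e : Fin n × Fin n, (e.2 : ℕ) = (e.1 : ℕ) + 1 → ∀ ν : Fin n →₀ ℕ,
      (Finsupp.single e.1 1 + Finsupp.single e.2 (D.w e.2) ≤ ν ↔
        1 ≤ ν e.1 ∧ D.w e.2 ≤ ν e.2) := by
    intro e he ν
    have hne : e.1 ≠ e.2 := by
      intro h; rw [h] at he; omega
    constructor
    · intro h
      have hne' : ¬ (e.2 = e.1) := fun hcc => hne hcc.symm
      have hx1 := Finsupp.le_def.mp h e.1
      have hx2 := Finsupp.le_def.mp h e.2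
      rw [Finsupp.add_apply, Finsupp.single_apply, Finsupp.single_apply] at hx1 hx2
      rw [if_pos rfl, if_neg hne'] at hx1
      rw [if_neg hne, if_pos rfl] at hx2
      omega
    · rintro ⟨ha, hb⟩
      rw [Finsupp.le_def]
      intro v
      rw [Finsupp.add_apply, Finsupp.single_apply, Finsupp.single_apply]
      by_cases hv1 : e.1 = v
      · rw [if_pos hv1, if_neg (show ¬ e.2 = v from fun hcc => hne (hv1.trans hcc.symm))]
        subst hv1; omega
      · by_cases hv2 : e.2 = v
        · rw [if_neg hv1, if_pos hv2]
          subst hv2; omega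
        · rw [if_neg hv1, if_neg hv2]; omega
  have hcon' : ∀ e : Fin n × Fin n, (e.2 : ℕ) = (e.1 : ℕ) + 1 →
      μ e.1 = 0 ∨ μ e.2 < D.w e.2 := by
    intro e he
    have h := hcon (Finsupp.single e.1 1 + Finsupp.single e.2 (D.w e.2))
      ⟨e, by rw [hE]; exact he, rfl⟩
    rw [hle_iff e he μ] at h
    push_neg at h
    by_cases h0 : μ e.1 = 0
    · exact Or.inl h0
    · exact Or.inr (h (by omega))
  have Hsup : ∀ v : Fin n,
      (∀ xi ∈ (X v * f).support, ∃ si ∈ {s : Fin n →₀ ℕ |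
        ∃ e ∈ D.E, s = Finsupp.single e.1 1 + Finsupp.single e.2 (D.w e.2)}, si ≤ xi) →
      ∃ e : Fin n × Fin n, (e.2 : ℕ) = (e.1 : ℕ) + 1 ∧
        1 ≤ (if v = e.1 then 1 else 0) + μ e.1 ∧
        D.w e.2 ≤ (if v = e.2 then 1 else 0) + μ e.2 := by
    intro v hv
    have hsup : Finsupp.single v 1 + μ ∈ (X v * f).support := by
      rw [MvPolynomial.mem_support_iff, MvPolynomial.coeff_X_mul]
      exact MvPolynomial.mem_support_iff.mp hμ
    obtain ⟨s, hs, hle⟩ := hv _ hsup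
    obtain ⟨e, he, rfl⟩ := hs
    rw [hE] at he
    obtain ⟨ha, hb⟩ := (hle_iff e he _).mp hle
    rw [Finsupp.add_apply, Finsupp.single_apply] at ha
    rw [Finsupp.add_apply, Finsupp.single_apply] at hb
    exact ⟨e, he, ha, hb⟩
  -- Step 2 : μ at j+2 vanishes
  obtain ⟨e2, he2, c21, c22⟩ := Hsup ⟨j + 2, h2⟩ H2
  have hB : μ ⟨j + 2, h2⟩ = 0 := by
    rcases hcon' e2 he2 with h | h
    · by_cases hq : (⟨j + 2, h2⟩ : Fin n) = e2.1
      · rw [hq]; exact h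
      · rw [if_neg hq] at c21; omega
    · by_cases hq : (⟨j + 2, h2⟩ : Fin n) = e2.2
      · rw [← hq] at h
        have hwB' : D.w (⟨j + 2, h2⟩ : Fin n) = 1 := hw1
        omega
      · rw [if_neg hq] at c22; omega
  -- Step 3
  obtain ⟨e3, he3, c31, c32⟩ := Hsup ⟨j + 3, h3⟩ H3
  obtain ⟨h4, hD, hC⟩ : ∃ h4 : j + 4 < n,
      D.w ⟨j + 4, h4⟩ ≤ μ ⟨j + 4, h4⟩ ∧ μ ⟨j + 3, h3⟩ = 0 := by
    by_cases hq : (⟨j + 3, h3⟩ : Fin n) = e3.1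
    · have hval1 : (e3.1 : ℕ) = j + 3 := by rw [← hq]
      have h4 : j + 4 < n := by
        have := e3.2.isLt; omega
      have heq2 : e3.2 = ⟨j + 4, h4⟩ := Fin.ext (show (e3.2 : ℕ) = j + 4 by omega)
      have hne2 : (⟨j + 3, h3⟩ : Fin n) ≠ e3.2 := by
        intro hc
        have := congrArg Fin.val hc
        simp only [heq2] at this
        omega
      rw [if_neg hne2] at c32
      rw [heq2] at c32
      refine ⟨h4, by omega, ?_⟩
      rcases hcon' e3 he3 with h | h
      · rw [hq]; exact h
      · rw [heq2] at h; omega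
    · rw [if_neg hq] at c31
      rcases hcon' e3 he3 with h | h
      · omega
      · by_cases hq2 : (⟨j + 3, h3⟩ : Fin n) = e3.2
        · have hval2 : (e3.2 : ℕ) = j + 3 := by rw [← hq2]
          have heq1 : e3.1 = ⟨j + 2, h2⟩ := Fin.ext (show (e3.1 : ℕ) = j + 2 by omega)
          rw [heq1] at c31
          omega
        · rw [if_neg hq2] at c32; omega
  -- Step 4
  obtain ⟨e4, he4, c41, c42⟩ := Hsup ⟨j + 4, h4⟩ (H4 h4)
  have hwD : 1 ≤ D.w (⟨j + 4, h4⟩ : Fin n) := D.w_pos _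
  rcases hcon' e4 he4 with h | h
  · by_cases hq : (⟨j + 4, h4⟩ : Fin n) = e4.1
    · rw [← hq] at h; omega
    · rw [if_neg hq] at c41; omega
  · by_cases hq : (⟨j + 4, h4⟩ : Fin n) = e4.2
    · have hval2 : (e4.2 : ℕ) = j + 4 := by rw [← hq]
      have heq1 : e4.1 = ⟨j + 3, h3⟩ := Fin.ext (show (e4.1 : ℕ) = j + 3 by omega)
      have hne1 : (⟨j + 4, h4⟩ : Fin n) ≠ e4.1 := by
        intro hc
        have := congrArg Fin.val hc
        simp only [heq1] at this
        omega
      rw [if_neg hne1, heq1] at c41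
      omega
    · rw [if_neg hq] at c42; omega



private lemma not_mem_cube {n : ℕ} (k : Type*) [Field k] (D : WOGraph (Fin n))
    (hE : D.E = {e : Fin n × Fin n | (e.2 : ℕ) = (e.1 : ℕ) + 1})
    (j : ℕ) (h0 : j < n) (h1 : j + 1 < n) (h2 : j + 2 < n) (h3 : j + 3 < n)
    (hwA : 2 ≤ D.w ⟨j + 1, h1⟩) (hwB : D.w ⟨j + 2, h2⟩ = 1) :
    (X ⟨j, h0⟩ * X ⟨j + 1, h1⟩ ^ D.w ⟨j + 1, h1⟩ * X ⟨j + 2, h2⟩ ^ 2 *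
        X ⟨j + 3, h3⟩ ^ D.w ⟨j + 3, h3⟩ : MvPolynomial (Fin n) k)
      ∉ D.edgeIdeal k ^ 3 := by
  intro hmem
  set W := D.w (⟨j + 1, h1⟩ : Fin n) with hW
  set W' := D.w (⟨j + 3, h3⟩ : Fin n) with hW'
  have hW'pos : 1 ≤ W' := D.w_pos _
  set φ := (aeval fun v : Fin n => (Polynomial.X : Polynomial k) ^ cfun j W W' (v : ℕ) :
      MvPolynomial (Fin n) k →ₐ[k] Polynomial k) with hφ
  have hmap : Ideal.map φ (D.edgeIdeal k) ≤
      Ideal.span {(Polynomial.X : Polynomial k) ^ (W * W')} := by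
    unfold WOGraph.edgeIdeal
    rw [Ideal.map_span, Ideal.span_le]
    rintro q ⟨g, ⟨e, he, rfl⟩, rfl⟩
    rw [hE] at he
    have he' : (e.2 : ℕ) = (e.1 : ℕ) + 1 := he
    have hcomp : φ (X e.1 * X e.2 ^ D.w e.2) =
        Polynomial.X ^ (cfun j W W' (e.1 : ℕ) + cfun j W W' ((e.1 : ℕ) + 1) * D.w e.2) := by
      simp only [hφ, map_mul, map_pow, aeval_X]
      rw [← pow_mul, ← pow_add, he]
    rw [SetLike.mem_coe, hcomp, Ideal.mem_span_singleton]
    apply pow_dvd_pow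
    have hd : 1 ≤ D.w e.2 := D.w_pos _
    refine cfun_bound j W W' (e.1 : ℕ) (D.w e.2) hwA hW'pos hd ?_ ?_ ?_
    · intro ht
      have : e.2 = ⟨j + 1, h1⟩ := Fin.ext (show (e.2 : ℕ) = j + 1 by omega)
      rw [this]
    · intro ht
      have : e.2 = ⟨j + 2, h2⟩ := Fin.ext (show (e.2 : ℕ) = j + 2 by omega)
      rw [this, hwB]
    · intro ht
      have : e.2 = ⟨j + 3, h3⟩ := Fin.ext (show (e.2 : ℕ) = j + 3 by omega)
      rw [this]
  have e0 : cfun j W W' ((⟨j, h0⟩ : Fin n) : ℕ) = 0 := by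
    unfold cfun; rw [if_pos rfl]
  have e1 : cfun j W W' ((⟨j + 1, h1⟩ : Fin n) : ℕ) = W' := by
    have hv : ((⟨j + 1, h1⟩ : Fin n) : ℕ) = j + 1 := rfl
    unfold cfun; rw [hv, if_neg (by omega), if_pos rfl]
  have e2 : cfun j W W' ((⟨j + 2, h2⟩ : Fin n) : ℕ) = (W - 1) * W' := by
    have hv : ((⟨j + 2, h2⟩ : Fin n) : ℕ) = j + 2 := rfl
    unfold cfun; rw [hv, if_neg (by omega), if_neg (by omega), if_pos rfl]
  have e3 : cfun j W W' ((⟨j + 3, h3⟩ : Fin n) : ℕ) = 1 := by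
    have hv : ((⟨j + 3, h3⟩ : Fin n) : ℕ) = j + 3 := rfl
    unfold cfun; rw [hv, if_neg (by omega), if_neg (by omega), if_neg (by omega), if_pos rfl]
  have hφm : φ (X (⟨j, h0⟩ : Fin n) * X (⟨j + 1, h1⟩ : Fin n) ^ W *
      X (⟨j + 2, h2⟩ : Fin n) ^ 2 * X (⟨j + 3, h3⟩ : Fin n) ^ W') =
      Polynomial.X ^ (0 + W' * W + (W - 1) * W' * 2 + 1 * W') := by
    simp only [hφ, map_mul, map_pow, aeval_X, e0, e1, e2, e3]
    rw [← pow_mul, ← pow_mul, ← pow_mul, ← pow_add, ← pow_add, ← pow_add]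
  have hx : φ (X (⟨j, h0⟩ : Fin n) * X (⟨j + 1, h1⟩ : Fin n) ^ W *
      X (⟨j + 2, h2⟩ : Fin n) ^ 2 * X (⟨j + 3, h3⟩ : Fin n) ^ W') ∈
      Ideal.map φ (D.edgeIdeal k ^ 3) := Ideal.mem_map_of_mem _ hmem
  rw [Ideal.map_pow] at hx
  have hx2 := Ideal.pow_right_mono hmap 3 hx
  rw [Ideal.span_singleton_pow, Ideal.mem_span_singleton, hφm] at hx2
  have hdeg := Polynomial.natDegree_le_of_dvd hx2 (pow_ne_zero _ Polynomial.X_ne_zero)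
  simp only [Polynomial.natDegree_pow, Polynomial.natDegree_X, mul_one] at hdeg
  have hsub : (W - 1) * W' = W * W' - W' := by rw [Nat.sub_mul, one_mul]
  have hle : W' ≤ W * W' := Nat.le_mul_of_pos_left W' (by omega)
  rw [hsub, mul_comm W' W] at hdeg
  generalize hP : W * W' = P at hdeg hle
  omega

end AuxStatement7

/-- Let `D` be a weighted oriented uni-directed line on vertices
`x₁, …, xₙ` (vertex `xₜ` is the index `t - 1 : Fin n`) with edges `(xᵢ, xᵢ₊₁)` for
`1 ≤ i ≤ n-1`.  If for some `1 < i < n-1` one has `wᵢ ≥ 2` and `wᵢ₊₁ = 1`, then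
`I(D)^{(3)} ≠ I(D)^3`. -/
theorem statement_7 {n : ℕ} (k : Type*) [Field k] (D : WOGraph (Fin n))
    (hE : D.E = {e : Fin n × Fin n | (e.2 : ℕ) = (e.1 : ℕ) + 1})
    (i : ℕ) (hi1 : 1 < i) (hi2 : i < n - 1)
    (hwi : 2 ≤ D.w ⟨i - 1, by omega⟩)
    (hwi1 : D.w ⟨i, by omega⟩ = 1) :
    symbolicPower (D.edgeIdeal k) 3 ≠ D.edgeIdeal k ^ 3 := by
  obtain ⟨j, rfl⟩ : ∃ j, i = j + 2 := ⟨i - 2, by omega⟩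
  have hn : j + 4 ≤ n := by omega
  have h0 : j < n := by omega
  have h1 : j + 1 < n := by omega
  have h2 : j + 2 < n := by omega
  have h3 : j + 3 < n := by omega
  have hwA : 2 ≤ D.w ⟨j + 1, h1⟩ := hwi
  have hwB : D.w ⟨j + 2, h2⟩ = 1 := hwi1
  have hwC : 1 ≤ D.w (⟨j + 3, h3⟩ : Fin n) := D.w_pos _
  set I : Ideal (MvPolynomial (Fin n) k) := D.edgeIdeal k with hIdef
  set m : MvPolynomial (Fin n) k := X ⟨j, h0⟩ * X ⟨j + 1, h1⟩ ^ D.w ⟨j + 1, h1⟩ *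
    X ⟨j + 2, h2⟩ ^ 2 * X ⟨j + 3, h3⟩ ^ D.w ⟨j + 3, h3⟩ with hm
  -- generators of the edge ideal
  have hgen : ∀ (t : ℕ) (h' : t < n) (h : t + 1 < n),
      X (⟨t, h'⟩ : Fin n) * X (⟨t + 1, h⟩ : Fin n) ^ D.w ⟨t + 1, h⟩ ∈ I := by
    intro t h' h
    apply Ideal.subset_span
    exact ⟨(⟨t, h'⟩, ⟨t + 1, h⟩), by rw [hE]; exact rfl, rfl⟩
  have hprod : ∀ g1 g2 g3 r : MvPolynomial (Fin n) k, g1 ∈ I → g2 ∈ I → g3 ∈ I →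
      r * (g1 * g2 * g3) ∈ I ^ 3 := by
    intro g1 g2 g3 r hg1 hg2 hg3
    refine Ideal.mul_mem_left _ r ?_
    have h33 : I ^ 3 = I * I * I := by ring
    rw [h33]
    exact Ideal.mul_mem_mul (Ideal.mul_mem_mul hg1 hg2) hg3
  obtain ⟨W2, hW2⟩ : ∃ c, D.w (⟨j + 1, h1⟩ : Fin n) = c + 2 := ⟨D.w (⟨j + 1, h1⟩ : Fin n) - 2, by omega⟩
  obtain ⟨W1, hW1⟩ : ∃ c, D.w (⟨j + 3, h3⟩ : Fin n) = c + 1 := ⟨D.w (⟨j + 3, h3⟩ : Fin n) - 1, by omega⟩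
  -- the three unconditional multipliers
  have hu2 : X (⟨j + 2, h2⟩ : Fin n) * m ∈ I ^ 3 := by
    have hid : X (⟨j + 2, h2⟩ : Fin n) * m = (X ⟨j, h0⟩ * X ⟨j + 1, h1⟩ ^ W2) *
        ((X ⟨j + 1, h1⟩ * X ⟨j + 2, h2⟩ ^ D.w ⟨j + 2, h2⟩) *
          (X ⟨j + 1, h1⟩ * X ⟨j + 2, h2⟩ ^ D.w ⟨j + 2, h2⟩) *
          (X ⟨j + 2, h2⟩ * X ⟨j + 3, h3⟩ ^ D.w ⟨j + 3, h3⟩)) := by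
      rw [hm, hwB, hW2]; ring
    rw [hid]
    exact hprod _ _ _ _ (hgen (j + 1) h1 h2) (hgen (j + 1) h1 h2) (hgen (j + 2) h2 h3)
  have hu3 : X (⟨j + 3, h3⟩ : Fin n) ^ D.w (⟨j + 3, h3⟩ : Fin n) * m ∈ I ^ 3 := by
    have hid : X (⟨j + 3, h3⟩ : Fin n) ^ D.w (⟨j + 3, h3⟩ : Fin n) * m =
        1 * ((X ⟨j, h0⟩ * X ⟨j + 1, h1⟩ ^ D.w ⟨j + 1, h1⟩) *
          (X ⟨j + 2, h2⟩ * X ⟨j + 3, h3⟩ ^ D.w ⟨j + 3, h3⟩) *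
          (X ⟨j + 2, h2⟩ * X ⟨j + 3, h3⟩ ^ D.w ⟨j + 3, h3⟩)) := by
      rw [hm]; ring
    rw [hid]
    exact hprod _ _ _ _ (hgen j h0 h1) (hgen (j + 2) h2 h3) (hgen (j + 2) h2 h3)
  have hu4 : ∀ h4 : j + 4 < n,
      X (⟨j + 4, h4⟩ : Fin n) ^ D.w (⟨j + 4, h4⟩ : Fin n) * m ∈ I ^ 3 := by
    intro h4
    have hid : X (⟨j + 4, h4⟩ : Fin n) ^ D.w (⟨j + 4, h4⟩ : Fin n) * m =
        (X ⟨j, h0⟩ * X ⟨j + 1, h1⟩ ^ W2 * X ⟨j + 3, h3⟩ ^ W1) *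
        ((X ⟨j + 1, h1⟩ * X ⟨j + 2, h2⟩ ^ D.w ⟨j + 2, h2⟩) *
          (X ⟨j + 1, h1⟩ * X ⟨j + 2, h2⟩ ^ D.w ⟨j + 2, h2⟩) *
          (X ⟨j + 3, h3⟩ * X ⟨j + 4, h4⟩ ^ D.w ⟨j + 4, h4⟩)) := by
      rw [hm, hwB, hW2, hW1]; ring
    rw [hid]
    exact hprod _ _ _ _ (hgen (j + 1) h1 h2) (hgen (j + 1) h1 h2) (hgen (j + 3) h3 h4)
  -- m is not in I ^ 3
  have hnotmem : m ∉ I ^ 3 := not_mem_cube k D hE j h0 h1 h2 h3 hwA hwB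
  -- m is in the third symbolic power
  have hsym : m ∈ symbolicPower I 3 := by
    unfold symbolicPower
    refine (Submodule.mem_iInf _).mpr ?_
    rintro ⟨p, hp⟩
    haveI hpr : p.IsPrime := hp.1
    obtain ⟨u, hu, hum⟩ : ∃ u : MvPolynomial (Fin n) k, u ∉ p ∧ u * m ∈ I ^ 3 := by
      obtain ⟨hpr', x, hxann⟩ := isAssociatedPrime_iff.mp hp
      obtain ⟨f, rfl⟩ := Ideal.Quotient.mk_surjective x
      have hmul : ∀ r : MvPolynomial (Fin n) k, r ∈ p → r * f ∈ I := by
        intro r hr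
        rw [hxann, Submodule.mem_colon_singleton, Submodule.mem_bot] at hr
        have hq0 : Ideal.Quotient.mk I (r * f) = 0 := by
          rw [map_mul]
          exact hr
        exact Ideal.Quotient.eq_zero_iff_mem.mp hq0
      by_cases hB' : X (⟨j + 2, h2⟩ : Fin n) ∈ p
      · by_cases hC' : X (⟨j + 3, h3⟩ : Fin n) ∈ p
        · have hfalse : ∀ h4 : j + 4 < n, X (⟨j + 4, h4⟩ : Fin n) ∈ p → False := by
            intro h4 hD'
            have hfI : f ∈ I := comb_aux k D hE j hn hwB f
              (hmul _ hB') (hmul _ hC') (fun h => hmul _ hD')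
            have hzero : Ideal.Quotient.mk I f = 0 := Ideal.Quotient.eq_zero_iff_mem.mpr hfI
            rw [hzero, Submodule.colon_singleton_zero] at hxann
            exact hpr'.ne_top hxann
          by_cases h4 : j + 4 < n
          · by_cases hD' : X (⟨j + 4, h4⟩ : Fin n) ∈ p
            · exact absurd (hfalse h4 hD') id
            · exact ⟨X (⟨j + 4, h4⟩ : Fin n) ^ D.w (⟨j + 4, h4⟩ : Fin n),
                fun hc => hD' ((hpr.pow_mem_iff_mem _ (D.w_pos _)).mp hc), hu4 h4⟩
          · have hfI : f ∈ I := comb_aux k D hE j hn hwB f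
              (hmul _ hB') (hmul _ hC') (fun h => absurd h h4)
            have hzero : Ideal.Quotient.mk I f = 0 := Ideal.Quotient.eq_zero_iff_mem.mpr hfI
            rw [hzero, Submodule.colon_singleton_zero] at hxann
            exact absurd hxann hpr'.ne_top
        · exact ⟨X (⟨j + 3, h3⟩ : Fin n) ^ D.w (⟨j + 3, h3⟩ : Fin n),
            fun hc => hC' ((hpr.pow_mem_iff_mem _ (D.w_pos _)).mp hc), hu3⟩
      · exact ⟨X (⟨j + 2, h2⟩ : Fin n), hB', hu2⟩
    rw [Ideal.mem_comap]
    have hunit : IsUnit (algebraMap (MvPolynomial (Fin n) k)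
        (Localization p.primeCompl) u) :=
      IsLocalization.map_units _ (⟨u, hu⟩ : p.primeCompl)
    have himg : algebraMap (MvPolynomial (Fin n) k) (Localization p.primeCompl) (u * m) ∈
        Ideal.map (algebraMap (MvPolynomial (Fin n) k) (Localization p.primeCompl)) (I ^ 3) :=
      Ideal.mem_map_of_mem _ hum
    rw [map_mul] at himg
    have hrw : algebraMap (MvPolynomial (Fin n) k) (Localization p.primeCompl) m =
        ↑hunit.unit⁻¹ * (algebraMap (MvPolynomial (Fin n) k) (Localization p.primeCompl) u *
          algebraMap (MvPolynomial (Fin n) k) (Localization p.primeCompl) m) := by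
      rw [← mul_assoc, IsUnit.val_inv_mul, one_mul]
    rw [hrw]
    exact Ideal.mul_mem_left _ _ himg
  intro heq
  rw [heq] at hsym
  exact hnotmem hsym
end

section
/- Let R = k[x₁, ..., xₙ] be a polynomial ring over a field k, let w₂, ..., wₙ be positive integers, and let I = (x₁x₂^{w₂}, x₂x₃^{w₃}, ..., x_{n-1}xₙ^{wₙ}). Suppose for some i with 1 < i < n-1 that wᵢ ≥ 2 and w_{i+1} = 1. Then the monomial f = x_{i-1} xᵢ^{wᵢ} x_{i+1}² x_{i+2}^{w_{i+2}} does not belong to I³. -/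
open MvPolynomial Pointwise

private lemma aux_two {σ : Type*} {k : Type*} [CommSemiring k] (a b : σ) (e : ℕ) :
    (X a * X b ^ e : MvPolynomial σ k) =
      monomial (Finsupp.single a 1 + Finsupp.single b e) 1 := by
  rw [X_pow_eq_monomial, X, monomial_mul, one_mul]

private lemma aux_four {σ : Type*} {k : Type*} [CommSemiring k] (a b c d : σ) (p q r : ℕ) :
    (X a * X b ^ p * X c ^ q * X d ^ r : MvPolynomial σ k) =
      monomial (Finsupp.single a 1 + Finsupp.single b p + Finsupp.single c q +
        Finsupp.single d r) 1 := by
  rw [aux_two, X_pow_eq_monomial, X_pow_eq_monomial, monomial_mul, monomial_mul,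
    one_mul, one_mul]

private lemma range_lemma (m j : ℕ) (w : ℕ → ℕ) (hw : 1 ≤ w (j + 1)) (hj : 1 ≤ j)
    (g : ∀ t : ℕ, (if j - 1 = t then 1 else 0) + (if j = t then w (j + 1) else 0) ≤
      (if m = t then 1 else 0) + (if m + 1 = t then w (m + 2) else 0) +
        (if m + 2 = t then 2 else 0) + (if m + 3 = t then w (m + 4) else 0)) :
    j = m + 1 ∨ j = m + 2 ∨ j = m + 3 := by
  have t1 := g (j - 1)
  have t2 := g j
  simp only [eq_self_iff_true, if_true] at t1 t2
  have d2 : j = m ∨ j = m + 1 ∨ j = m + 2 ∨ j = m + 3 := by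
    split_ifs at t2 <;> omega
  have d1 : j = m + 1 ∨ j = m + 2 ∨ j = m + 3 ∨ j = m + 4 := by
    split_ifs at t1 <;> omega
  omega

private lemma key_lemma (m a b c : ℕ) (w : ℕ → ℕ) (ha1 : 1 ≤ a) (hb1 : 1 ≤ b) (hc1 : 1 ≤ c)
    (hwa : 1 ≤ w (a + 1)) (hwb : 1 ≤ w (b + 1)) (hwc : 1 ≤ w (c + 1))
    (hw2 : 2 ≤ w (m + 2)) (hw3 : w (m + 3) = 1) (hw4 : 1 ≤ w (m + 4))
    (g : ∀ t : ℕ,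
      ((if a - 1 = t then 1 else 0) + (if a = t then w (a + 1) else 0)) +
      ((if b - 1 = t then 1 else 0) + (if b = t then w (b + 1) else 0)) +
      ((if c - 1 = t then 1 else 0) + (if c = t then w (c + 1) else 0)) ≤
      (if m = t then 1 else 0) + (if m + 1 = t then w (m + 2) else 0) +
        (if m + 2 = t then 2 else 0) + (if m + 3 = t then w (m + 4) else 0)) :
    False := by
  have ga := range_lemma m a w hwa ha1 (fun t =>
    le_trans (le_trans (Nat.le_add_right _ _) (Nat.le_add_right _ _)) (g t))
  have gb := range_lemma m b w hwb hb1 (fun t =>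
    le_trans (le_trans (Nat.le_add_left _ _) (Nat.le_add_right _ _)) (g t))
  have gc := range_lemma m c w hwc hc1 (fun t =>
    le_trans (Nat.le_add_left _ _) (g t))
  have g1 := g m
  have g2 := g (m + 1)
  have g3 := g (m + 2)
  have g4 := g (m + 3)
  have e1 : m + 1 - 1 = m := rfl
  have e2 : m + 2 - 1 = m + 1 := rfl
  have e3 : m + 3 - 1 = m + 2 := rfl
  have e4 : m + 1 + 1 = m + 2 := rfl
  have e5 : m + 2 + 1 = m + 3 := rfl
  have e6 : m + 3 + 1 = m + 4 := rfl
  rcases ga with rfl | rfl | rfl <;> rcases gb with rfl | rfl | rfl <;>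
      rcases gc with rfl | rfl | rfl <;>
    simp +arith only [e1, e2, e3, e4, e5, e6, hw3, eq_self_iff_true,
      if_true, if_false, ite_true, ite_false] at g1 g2 g3 g4 <;>
    omega

set_option maxHeartbeats 1000000 in
/-- Let `R = k[x₁, …, xₙ]` (the variable `xₜ` is `X ⟨t-1,_⟩` for
`t = 1, …, n`), let `w₂, …, wₙ` be positive integers and
`I = (x₁x₂^{w₂}, x₂x₃^{w₃}, …, x_{n-1}xₙ^{wₙ})`.  If for some `1 < i < n-1` one has
`wᵢ ≥ 2` and `wᵢ₊₁ = 1`, then `f = xᵢ₋₁ · xᵢ^{wᵢ} · xᵢ₊₁² · xᵢ₊₂^{wᵢ₊₂} ∉ I³`. -/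
theorem statement_9 {n : ℕ} (k : Type*) [Field k] (w : ℕ → ℕ)
    (hwpos : ∀ t : ℕ, 2 ≤ t → t ≤ n → 1 ≤ w t)
    (i : ℕ) (hi1 : 1 < i) (hi2 : i < n - 1)
    (hwi : 2 ≤ w i) (hwi1 : w (i + 1) = 1) :
    (X ⟨i - 2, by omega⟩ * X ⟨i - 1, by omega⟩ ^ w i * X ⟨i, by omega⟩ ^ 2 *
        X ⟨i + 1, by omega⟩ ^ w (i + 2) : MvPolynomial (Fin n) k) ∉
      (Ideal.span {f : MvPolynomial (Fin n) k |
        ∃ j : ℕ, ∃ _ : 1 ≤ j, ∃ _ : j ≤ n - 1,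
          f = X ⟨j - 1, by omega⟩ * X ⟨j, by omega⟩ ^ w (j + 1)}) ^ 3 := by
  classical
  intro hmem
  obtain ⟨m, rfl⟩ : ∃ m, i = m + 2 := ⟨i - 2, by omega⟩
  have hn : m + 3 < n := by omega
  have hw3 : w (m + 3) = 1 := by simpa using hwi1
  have hwB : 1 ≤ w (m + 4) := hwpos (m + 4) (by omega) (by omega)
  set T : Set (Fin n →₀ ℕ) := {s | ∃ j : ℕ, ∃ _ : 1 ≤ j, ∃ _ : j ≤ n - 1,
    s = Finsupp.single ⟨j - 1, by omega⟩ 1 + Finsupp.single ⟨j, by omega⟩ (w (j + 1))}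
    with hT
  have hset : {f : MvPolynomial (Fin n) k |
      ∃ j : ℕ, ∃ _ : 1 ≤ j, ∃ _ : j ≤ n - 1,
        f = X ⟨j - 1, by omega⟩ * X ⟨j, by omega⟩ ^ w (j + 1)} =
      (fun s => monomial s (1 : k)) '' T := by
    ext f
    constructor
    · rintro ⟨j, hj1, hj2, rfl⟩
      exact ⟨_, ⟨j, hj1, hj2, rfl⟩, (aux_two _ _ _).symm⟩
    · rintro ⟨s, ⟨j, hj1, hj2, rfl⟩, rfl⟩
      exact ⟨j, hj1, hj2, (aux_two _ _ _).symm⟩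
  rw [hset, pow_succ, pow_succ, pow_one, Ideal.span_mul_span', Ideal.span_mul_span'] at hmem
  set T3 : Set (Fin n →₀ ℕ) := {s | ∃ a ∈ T, ∃ b ∈ T, ∃ c ∈ T, s = a + b + c} with hT3
  have hsub : ((fun s => monomial s (1 : k)) '' T) * ((fun s => monomial s (1 : k)) '' T) *
      ((fun s => monomial s (1 : k)) '' T) ⊆ (fun s => monomial s (1 : k)) '' T3 := by
    rintro x hx
    obtain ⟨pq, hpq, r, ⟨sc, hc, rfl⟩, rfl⟩ := hx
    obtain ⟨p, ⟨sa, ha, rfl⟩, q, ⟨sb, hb, rfl⟩, rfl⟩ := hpq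
    exact ⟨sa + sb + sc, ⟨sa, ha, sb, hb, sc, hc, rfl⟩, by
      simp [monomial_mul]⟩
  have hmem' := Ideal.span_mono hsub hmem
  rw [aux_four, mem_ideal_span_monomial_image] at hmem'
  have hsupp : (Finsupp.single (⟨m + 2 - 2, by omega⟩ : Fin n) 1 +
      Finsupp.single ⟨m + 2 - 1, by omega⟩ (w (m + 2)) +
      Finsupp.single ⟨m + 2, by omega⟩ 2 +
      Finsupp.single ⟨m + 2 + 1, by omega⟩ (w (m + 2 + 2))) ∈
      (monomial (Finsupp.single (⟨m + 2 - 2, by omega⟩ : Fin n) 1 +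
      Finsupp.single ⟨m + 2 - 1, by omega⟩ (w (m + 2)) +
      Finsupp.single ⟨m + 2, by omega⟩ 2 +
      Finsupp.single ⟨m + 2 + 1, by omega⟩ (w (m + 2 + 2))) (1 : k)).support := by
    rw [support_monomial, if_neg one_ne_zero]
    exact Finset.mem_singleton_self _
  obtain ⟨s, hsT3, hle⟩ := hmem' _ hsupp
  obtain ⟨sa, ⟨aj, haj1, haj2, rfl⟩, sb, ⟨bj, hbj1, hbj2, rfl⟩, sc, ⟨cj, hcj1, hcj2, rfl⟩, rfl⟩
    := hsT3
  rw [Finsupp.le_def] at hle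
  have hwa : 1 ≤ w (aj + 1) := hwpos _ (by omega) (by omega)
  have hwb : 1 ≤ w (bj + 1) := hwpos _ (by omega) (by omega)
  have hwc : 1 ≤ w (cj + 1) := hwpos _ (by omega) (by omega)
  refine key_lemma m aj bj cj w haj1 hbj1 hcj1 hwa hwb hwc hwi hw3 hwB (fun t => ?_)
  by_cases ht : t < n
  · have h := hle ⟨t, ht⟩
    simpa only [Finsupp.add_apply, Finsupp.single_apply, Fin.mk.injEq,
      show m + 2 - 2 = m from rfl, show m + 2 - 1 = m + 1 from rfl,
      show m + 2 + 1 = m + 3 from rfl, show m + 2 + 2 = m + 4 from rfl] using h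
  · have h1 : aj - 1 ≠ t := by omega
    have h2 : aj ≠ t := by omega
    have h3 : bj - 1 ≠ t := by omega
    have h4 : bj ≠ t := by omega
    have h5 : cj - 1 ≠ t := by omega
    have h6 : cj ≠ t := by omega
    have h7 : m ≠ t := by omega
    have h8 : m + 1 ≠ t := by omega
    have h9 : m + 2 ≠ t := by omega
    have h10 : m + 3 ≠ t := by omega
    simp [h1, h2, h3, h4, h5, h6, h7, h8, h9, h10]
end

section
/- Let R = k[u₁, u₂, u₃, u₄, u₅, u₆] be a polynomial ring over a field k, let a, b ≥ 2 and c ≥ 1 be integers, and let I = (u₁u₂, u₂u₃, u₃u₄^a, u₄u₅^b, u₅u₆^c). Then for all s ≥ 1, (u₃, u₅^b)^s ∩ (u₂, u₄^a)^s ∩ (u₁, u₃, u₄, u₆^c)^s ⊆ I^s. -/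
open MvPolynomial

section Aux

lemma coreNumeric : ∀ s i1 j1 i2 j2 i3 j3 l3 m3 : ℕ, i1+j1 = s → i2+j2 = s → i3+j3+l3+m3 = s →
    ∃ n1 n2 n3 n4 n5 : ℕ, n1+n2+n3+n4+n5 = s ∧ n1 ≤ i3 ∧ n1+n2 ≤ i2 ∧
      (n2+n3 ≤ i1 ∨ n2+n3 ≤ j3) ∧ ((n3 ≤ j2 ∧ 2*n3+n4 ≤ 2*j2) ∨ (n3 = 0 ∧ n4 ≤ l3)) ∧
      n4 ≤ j1 ∧ 2*n4+n5 ≤ 2*j1 ∧ n5 ≤ m3 := by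
  intro s
  induction s with
  | zero => intro i1 j1 i2 j2 i3 j3 l3 m3 hA hB hC; exact ⟨0,0,0,0,0, by omega⟩
  | succ s ih =>
    intro i1 j1 i2 j2 i3 j3 l3 m3 hA hB hC
    by_cases hj1 : j1 = 0
    · by_cases hj2 : j2 = 0
      · -- t = 2, α = i1, β = i2
        by_cases hj3 : j3 = 0
        · by_cases hi3 : i3 = 0
          · by_cases hl3 : l3 = 0
            · obtain ⟨n1,n2,n3,n4,n5,h⟩ := ih (i1-1) j1 (i2-1) j2 i3 j3 l3 (m3-1)
                (by omega) (by omega) (by omega)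
              exact ⟨n1, n2+1, n3, n4, n5, by omega⟩
            · obtain ⟨n1,n2,n3,n4,n5,h⟩ := ih (i1-1) j1 (i2-1) j2 i3 j3 (l3-1) m3
                (by omega) (by omega) (by omega)
              exact ⟨n1, n2+1, n3, n4, n5, by omega⟩
          · obtain ⟨n1,n2,n3,n4,n5,h⟩ := ih (i1-1) j1 (i2-1) j2 (i3-1) j3 l3 m3
              (by omega) (by omega) (by omega)
            exact ⟨n1, n2+1, n3, n4, n5, by omega⟩
        · obtain ⟨n1,n2,n3,n4,n5,h⟩ := ih (i1-1) j1 (i2-1) j2 i3 (j3-1) l3 m3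
            (by omega) (by omega) (by omega)
          exact ⟨n1, n2+1, n3, n4, n5, by omega⟩
      · -- t = 3, α = i1, β = j2
        by_cases hj3 : j3 = 0
        · by_cases hi3 : i3 = 0
          · by_cases hl3 : l3 = 0
            · obtain ⟨n1,n2,n3,n4,n5,h⟩ := ih (i1-1) j1 i2 (j2-1) i3 j3 l3 (m3-1)
                (by omega) (by omega) (by omega)
              exact ⟨n1, n2, n3+1, n4, n5, by omega⟩
            · obtain ⟨n1,n2,n3,n4,n5,h⟩ := ih (i1-1) j1 i2 (j2-1) i3 j3 (l3-1) m3
                (by omega) (by omega) (by omega)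
              exact ⟨n1, n2, n3+1, n4, n5, by omega⟩
          · obtain ⟨n1,n2,n3,n4,n5,h⟩ := ih (i1-1) j1 i2 (j2-1) (i3-1) j3 l3 m3
              (by omega) (by omega) (by omega)
            exact ⟨n1, n2, n3+1, n4, n5, by omega⟩
        · obtain ⟨n1,n2,n3,n4,n5,h⟩ := ih (i1-1) j1 i2 (j2-1) i3 (j3-1) l3 m3
            (by omega) (by omega) (by omega)
          exact ⟨n1, n2, n3+1, n4, n5, by omega⟩
    · by_cases hj2 : j2 = 0
      · -- j1 > 0, j2 = 0, i2 = s+1 > 0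
        by_cases hm3 : m3 = 0
        · by_cases hl3 : l3 = 0
          · by_cases hi3 : i3 = 0
            · -- j3 = s+1 > 0 ; t = 2, α = i1 if pos else j1
              by_cases hi1 : i1 = 0
              · obtain ⟨n1,n2,n3,n4,n5,h⟩ := ih i1 (j1-1) (i2-1) j2 i3 (j3-1) l3 m3
                  (by omega) (by omega) (by omega)
                exact ⟨n1, n2+1, n3, n4, n5, by omega⟩
              · obtain ⟨n1,n2,n3,n4,n5,h⟩ := ih (i1-1) j1 (i2-1) j2 i3 (j3-1) l3 m3
                  (by omega) (by omega) (by omega)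
                exact ⟨n1, n2+1, n3, n4, n5, by omega⟩
            · -- t = 1, α = j1, β = i2, γ = i3
              obtain ⟨n1,n2,n3,n4,n5,h⟩ := ih i1 (j1-1) (i2-1) j2 (i3-1) j3 l3 m3
                (by omega) (by omega) (by omega)
              exact ⟨n1+1, n2, n3, n4, n5, by omega⟩
          · -- t = 4 via l3 branch, α = j1, β = i2, γ = l3
            obtain ⟨n1,n2,n3,n4,n5,h⟩ := ih i1 (j1-1) (i2-1) j2 i3 j3 (l3-1) m3
              (by omega) (by omega) (by omega)
            exact ⟨n1, n2, n3, n4+1, n5, by omega⟩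
        · -- t = 5, α = j1, β = i2, γ = m3
          obtain ⟨n1,n2,n3,n4,n5,h⟩ := ih i1 (j1-1) (i2-1) j2 i3 j3 l3 (m3-1)
            (by omega) (by omega) (by omega)
          exact ⟨n1, n2, n3, n4, n5+1, by omega⟩
      · -- j1 > 0, j2 > 0 : t = 4, α = j1, β = j2, γ = l3 if pos else first pos
        by_cases hl3 : l3 = 0
        · by_cases hi3 : i3 = 0
          · by_cases hj3 : j3 = 0
            · obtain ⟨n1,n2,n3,n4,n5,h⟩ := ih i1 (j1-1) i2 (j2-1) i3 j3 l3 (m3-1)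
                (by omega) (by omega) (by omega)
              exact ⟨n1, n2, n3, n4+1, n5, by omega⟩
            · obtain ⟨n1,n2,n3,n4,n5,h⟩ := ih i1 (j1-1) i2 (j2-1) i3 (j3-1) l3 m3
                (by omega) (by omega) (by omega)
              exact ⟨n1, n2, n3, n4+1, n5, by omega⟩
          · obtain ⟨n1,n2,n3,n4,n5,h⟩ := ih i1 (j1-1) i2 (j2-1) (i3-1) j3 l3 m3
              (by omega) (by omega) (by omega)
            exact ⟨n1, n2, n3, n4+1, n5, by omega⟩
        · obtain ⟨n1,n2,n3,n4,n5,h⟩ := ih i1 (j1-1) i2 (j2-1) i3 j3 (l3-1) m3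
            (by omega) (by omega) (by omega)
          exact ⟨n1, n2, n3, n4+1, n5, by omega⟩


variable {k : Type*} [Field k]

/-- iterated sumset of exponents -/
def addPow (T : Set (Fin 6 →₀ ℕ)) : ℕ → Set (Fin 6 →₀ ℕ)
  | 0 => {0}
  | s+1 => Set.image2 (· + ·) T (addPow T s)

lemma span_mon_pow_le (T : Set (Fin 6 →₀ ℕ)) (s : ℕ) :
    (Ideal.span ((fun d => monomial d (1:k)) '' T)) ^ s ≤
      Ideal.span ((fun d => monomial d (1:k)) '' addPow T s) := by
  induction s with
  | zero =>
    rw [pow_zero, Ideal.one_eq_top]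
    have : ((fun d => monomial d (1:k)) '' addPow T 0) = {1} := by
      simp [addPow, Set.image_singleton]
    rw [this, Ideal.span_singleton_one]
  | succ s ih =>
    rw [pow_succ]
    calc (Ideal.span ((fun d => monomial d (1:k)) '' T)) ^ s *
          Ideal.span ((fun d => monomial d (1:k)) '' T)
        ≤ Ideal.span ((fun d => monomial d (1:k)) '' addPow T s) *
          Ideal.span ((fun d => monomial d (1:k)) '' T) := Ideal.mul_mono_left ih
      _ ≤ _ := by
          rw [Ideal.span_mul_span']
          apply Ideal.span_mono
          rintro z hz
          rw [Set.mem_mul] at hz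
          obtain ⟨x, hx, y, hy, rfl⟩ := hz
          obtain ⟨d, hd, rfl⟩ := hx
          obtain ⟨t, ht, rfl⟩ := hy
          refine ⟨t + d, ⟨t, ht, d, hd, rfl⟩, ?_⟩
          rw [monomial_mul, one_mul, add_comm]

lemma addPow_pair {u v : Fin 6 →₀ ℕ} : ∀ {s : ℕ} {d : Fin 6 →₀ ℕ}, d ∈ addPow {u, v} s →
    ∃ i j, i + j = s ∧ d = i • u + j • v := by
  intro s
  induction s with
  | zero =>
    rintro d hd
    rw [addPow, Set.mem_singleton_iff] at hd
    exact ⟨0, 0, rfl, by simp [hd]⟩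
  | succ s ih =>
    rintro d hd
    obtain ⟨t, ht, d', hd', rfl⟩ := hd
    obtain ⟨i, j, hij, rfl⟩ := ih hd'
    rcases ht with rfl | rfl
    · exact ⟨i+1, j, by omega, by rw [succ_nsmul]; abel⟩
    · exact ⟨i, j+1, by omega, by rw [succ_nsmul]; abel⟩

lemma addPow_quad {u v w x : Fin 6 →₀ ℕ} : ∀ {s : ℕ} {d : Fin 6 →₀ ℕ},
    d ∈ addPow {u, v, w, x} s →
    ∃ i j l m, i + j + l + m = s ∧ d = i • u + j • v + l • w + m • x := by
  intro s
  induction s with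
  | zero =>
    rintro d hd
    rw [addPow, Set.mem_singleton_iff] at hd
    exact ⟨0, 0, 0, 0, rfl, by simp [hd]⟩
  | succ s ih =>
    rintro d hd
    obtain ⟨t, ht, d', hd', rfl⟩ := hd
    obtain ⟨i, j, l, m, hijlm, rfl⟩ := ih hd'
    rcases ht with rfl | rfl | rfl | rfl
    · exact ⟨i+1, j, l, m, by omega, by rw [succ_nsmul]; abel⟩
    · exact ⟨i, j+1, l, m, by omega, by rw [succ_nsmul]; abel⟩
    · exact ⟨i, j, l+1, m, by omega, by rw [succ_nsmul]; abel⟩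
    · exact ⟨i, j, l, m+1, by omega, by rw [succ_nsmul]; abel⟩

lemma hX6 (i : Fin 6) : (X i : MvPolynomial (Fin 6) k) = monomial (Finsupp.single i 1) 1 := by
  rw [← pow_one (X i), X_pow_eq_monomial]

end Aux

/-- In `R = k[u₁, …, u₆]` (here `uₜ = X (t-1) : MvPolynomial (Fin 6) k`),
for integers `a, b ≥ 2`, `c ≥ 1` and `I = (u₁u₂, u₂u₃, u₃u₄^a, u₄u₅^b, u₅u₆^c)`, one has
`(u₃, u₅^b)^s ∩ (u₂, u₄^a)^s ∩ (u₁, u₃, u₄, u₆^c)^s ⊆ I^s` for all `s ≥ 1`. -/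
theorem statement_11 (k : Type*) [Field k] (a b c : ℕ) (ha : 2 ≤ a) (hb : 2 ≤ b)
    (hc : 1 ≤ c) :
    ∀ s : ℕ, 1 ≤ s →
      (Ideal.span {X 2, (X 4 : MvPolynomial (Fin 6) k) ^ b}) ^ s ⊓
          (Ideal.span {X 1, (X 3 : MvPolynomial (Fin 6) k) ^ a}) ^ s ⊓
          (Ideal.span {X 0, X 2, X 3, (X 5 : MvPolynomial (Fin 6) k) ^ c}) ^ s ≤
        (Ideal.span {X 0 * X 1, X 1 * X 2, X 2 * X 3 ^ a, X 3 * X 4 ^ b,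
          (X 4 : MvPolynomial (Fin 6) k) * X 5 ^ c}) ^ s := by
  intro s _hs f hf
  simp only [Submodule.mem_inf] at hf
  obtain ⟨⟨hf1, hf2⟩, hf3⟩ := hf
  have hset1 : ({X 2, (X 4 : MvPolynomial (Fin 6) k) ^ b} : Set _) =
      (fun d => monomial d (1:k)) '' {Finsupp.single 2 1, Finsupp.single 4 b} := by
    simp only [Set.image_insert_eq, Set.image_singleton, ← X_pow_eq_monomial, pow_one]
  have hset2 : ({X 1, (X 3 : MvPolynomial (Fin 6) k) ^ a} : Set _) =
      (fun d => monomial d (1:k)) '' {Finsupp.single 1 1, Finsupp.single 3 a} := by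
    simp only [Set.image_insert_eq, Set.image_singleton, ← X_pow_eq_monomial, pow_one]
  have hset3 : ({X 0, X 2, X 3, (X 5 : MvPolynomial (Fin 6) k) ^ c} : Set _) =
      (fun d => monomial d (1:k)) ''
        {Finsupp.single 0 1, Finsupp.single 2 1, Finsupp.single 3 1, Finsupp.single 5 c} := by
    simp only [Set.image_insert_eq, Set.image_singleton, ← X_pow_eq_monomial, pow_one]
  rw [hset1] at hf1
  rw [hset2] at hf2
  rw [hset3] at hf3
  have H1 := mem_ideal_span_monomial_image.mp (span_mon_pow_le _ s hf1)
  have H2 := mem_ideal_span_monomial_image.mp (span_mon_pow_le _ s hf2)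
  have H3 := mem_ideal_span_monomial_image.mp (span_mon_pow_le _ s hf3)
  rw [← support_sum_monomial_coeff f]
  refine Ideal.sum_mem _ ?_
  intro e he
  obtain ⟨d1, hd1mem, hd1le⟩ := H1 e he
  obtain ⟨d2, hd2mem, hd2le⟩ := H2 e he
  obtain ⟨d3, hd3mem, hd3le⟩ := H3 e he
  obtain ⟨i1, j1, hij1, rfl⟩ := addPow_pair hd1mem
  obtain ⟨i2, j2, hij2, rfl⟩ := addPow_pair hd2mem
  obtain ⟨i3, j3, l3, m3, hijlm, rfl⟩ := addPow_quad hd3mem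
  -- coordinate inequalities
  have E2a : i1 ≤ e 2 := by
    have h := Finsupp.le_def.mp hd1le 2; simp [Finsupp.single_apply] at h; omega
  have E4 : j1 * b ≤ e 4 := by
    have h := Finsupp.le_def.mp hd1le 4; simpa [Finsupp.single_apply] using h
  have E1 : i2 ≤ e 1 := by
    have h := Finsupp.le_def.mp hd2le 1; simp [Finsupp.single_apply] at h; omega
  have E3a : j2 * a ≤ e 3 := by
    have h := Finsupp.le_def.mp hd2le 3; simpa [Finsupp.single_apply] using h
  have E0 : i3 ≤ e 0 := by
    have h := Finsupp.le_def.mp hd3le 0; simp [Finsupp.single_apply] at h; omega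
  have E2b : j3 ≤ e 2 := by
    have h := Finsupp.le_def.mp hd3le 2; simp [Finsupp.single_apply] at h; omega
  have E3b : l3 ≤ e 3 := by
    have h := Finsupp.le_def.mp hd3le 3; simp [Finsupp.single_apply] at h; omega
  have E5 : m3 * c ≤ e 5 := by
    have h := Finsupp.le_def.mp hd3le 5; simpa [Finsupp.single_apply] using h
  obtain ⟨n1, n2, n3, n4, n5, hsum, hn1, hn12, hOR3, hOR4, hn4, hn45, hn5⟩ :=
    coreNumeric s i1 j1 i2 j2 i3 j3 l3 m3 hij1 hij2 hijlm
  -- the six exponent bounds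
  have T0 : n1 ≤ e 0 := le_trans hn1 E0
  have T1 : n1 + n2 ≤ e 1 := le_trans hn12 E1
  have T2 : n2 + n3 ≤ e 2 := by rcases hOR3 with h | h; exacts [le_trans h E2a, le_trans h E2b]
  have T3 : n3 * a + n4 ≤ e 3 := by
    rcases hOR4 with ⟨h3, h34⟩ | ⟨h3, h4⟩
    · obtain ⟨a', rfl⟩ : ∃ a', a = 2 + a' := ⟨a - 2, by omega⟩
      calc n3 * (2 + a') + n4 = n3 * a' + (2*n3 + n4) := by ring
        _ ≤ j2 * a' + 2 * j2 := add_le_add (Nat.mul_le_mul_right _ h3) h34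
        _ = j2 * (2 + a') := by ring
        _ ≤ e 3 := E3a
    · rw [h3]; simpa using le_trans h4 E3b
  have T4 : n4 * b + n5 ≤ e 4 := by
    obtain ⟨b', rfl⟩ : ∃ b', b = 2 + b' := ⟨b - 2, by omega⟩
    calc n4 * (2 + b') + n5 = n4 * b' + (2*n4 + n5) := by ring
      _ ≤ j1 * b' + 2 * j1 := add_le_add (Nat.mul_le_mul_right _ hn4) hn45
      _ = j1 * (2 + b') := by ring
      _ ≤ e 4 := E4
  have T5 : n5 * c ≤ e 5 := le_trans (Nat.mul_le_mul_right _ hn5) E5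
  set D : Fin 6 →₀ ℕ := Finsupp.single 0 n1 + Finsupp.single 1 (n1+n2)
      + Finsupp.single 2 (n2+n3) + Finsupp.single 3 (n3*a+n4)
      + Finsupp.single 4 (n4*b+n5) + Finsupp.single 5 (n5*c) with hDdef
  have hD : D ≤ e := by
    rw [Finsupp.le_def]
    intro x
    fin_cases x <;> simp [hDdef, Finsupp.single_apply] <;> omega
  have hprod : ((X 0 * X 1)^n1 * (X 1 * X 2)^n2 * (X 2 * X 3^a)^n3 * (X 3 * X 4^b)^n4
      * (X 4 * X 5^c)^n5 : MvPolynomial (Fin 6) k) = monomial D 1 := by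
    have g1 : (X 0 * X 1 : MvPolynomial (Fin 6) k)
        = monomial (Finsupp.single 0 1 + Finsupp.single 1 1) 1 := by
      rw [hX6, hX6, monomial_mul, one_mul]
    have g2 : (X 1 * X 2 : MvPolynomial (Fin 6) k)
        = monomial (Finsupp.single 1 1 + Finsupp.single 2 1) 1 := by
      rw [hX6, hX6, monomial_mul, one_mul]
    have g3 : (X 2 * X 3 ^ a : MvPolynomial (Fin 6) k)
        = monomial (Finsupp.single 2 1 + Finsupp.single 3 a) 1 := by
      rw [hX6, X_pow_eq_monomial, monomial_mul, one_mul]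
    have g4 : (X 3 * X 4 ^ b : MvPolynomial (Fin 6) k)
        = monomial (Finsupp.single 3 1 + Finsupp.single 4 b) 1 := by
      rw [hX6, X_pow_eq_monomial, monomial_mul, one_mul]
    have g5 : (X 4 * X 5 ^ c : MvPolynomial (Fin 6) k)
        = monomial (Finsupp.single 4 1 + Finsupp.single 5 c) 1 := by
      rw [hX6, X_pow_eq_monomial, monomial_mul, one_mul]
    rw [g1, g2, g3, g4, g5]
    simp only [monomial_pow, one_pow, monomial_mul, one_mul]
    refine congrArg (fun d => monomial d (1:k)) ?_
    apply Finsupp.ext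
    intro x
    fin_cases x <;> simp [hDdef, Finsupp.single_apply, Finsupp.mul_apply] <;> ring
  have hImem : ((X 0 * X 1)^n1 * (X 1 * X 2)^n2 * (X 2 * X 3^a)^n3 * (X 3 * X 4^b)^n4
      * (X 4 * X 5^c)^n5 : MvPolynomial (Fin 6) k) ∈
      (Ideal.span {X 0 * X 1, X 1 * X 2, X 2 * X 3 ^ a, X 3 * X 4 ^ b,
        (X 4 : MvPolynomial (Fin 6) k) * X 5 ^ c}) ^ s := by
    rw [← hsum, pow_add, pow_add, pow_add, pow_add]
    refine Ideal.mul_mem_mul (Ideal.mul_mem_mul (Ideal.mul_mem_mul (Ideal.mul_mem_mul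
      (Ideal.pow_mem_pow ?_ _) (Ideal.pow_mem_pow ?_ _)) (Ideal.pow_mem_pow ?_ _))
      (Ideal.pow_mem_pow ?_ _)) (Ideal.pow_mem_pow ?_ _) <;>
      apply Ideal.subset_span <;> simp
  have hterm : (monomial e (coeff e f) : MvPolynomial (Fin 6) k)
      = monomial (e - D) (coeff e f) * monomial D 1 := by
    rw [monomial_mul, mul_one, tsub_add_cancel_of_le hD]
  rw [hterm, ← hprod]
  exact Ideal.mul_mem_left _ _ hImem
end
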